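/- arXiv:2208.00610 — 4 statements merged into one kernel-verified Lean document; each statement's English description precedes it below -/
import Mathlib

section
/- For $m > 2$ even and $n \geq 1$, the non-commuting graph of the metacyclic group $M_{2mn} = \langle a,b : a^m = b^{2n} = 1, bab^{-1} = a^{-1}\rangle$ is the complete $(\frac{m}{2}+1)$-partite graph $K_{(\frac{m}{2}-1)2n, 2n, 2n, \ldots, 2n}$ with $m/2$ parts of size $2n$. -/
set_option linter.unusedSectionVars false

/-- The non-commuting graph of a group. -/
def noncommGraph (G : Type*) [Group G] :
    SimpleGraph {g : G // g ∉ Subgroup.center G} where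
  Adj u v := u.1 * v.1 ≠ v.1 * u.1
  symm := ⟨fun _ _ h e => h e.symm⟩
  loopless := ⟨fun _ h => h rfl⟩

/-- Relations of the metacyclic group `M_{2mn} = ⟨a, b : a^m = b^(2n) = 1, b a b⁻¹ = a⁻¹⟩`. -/
def mRels (m n : ℕ) : Set (FreeGroup (Fin 2)) :=
  { (FreeGroup.of 0) ^ m, (FreeGroup.of 1) ^ (2 * n),
    FreeGroup.of 1 * FreeGroup.of 0 * (FreeGroup.of 1)⁻¹ * FreeGroup.of 0 }

namespace NCGaux

variable {m n : ℕ}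

@[ext]
structure Mc (m n : ℕ) where
  x : ZMod m
  y : ZMod (2 * n)
  deriving DecidableEq

/-- sign `(-1)^y`. -/
def sgn (m : ℕ) {n : ℕ} (j : ZMod (2 * n)) : ZMod m := if j.val % 2 = 0 then 1 else -1

section group
variable [NeZero n]

instance : NeZero (2 * n) := ⟨by have := NeZero.ne n; omega⟩

lemma val_add_parity (j l : ZMod (2 * n)) : (j + l).val % 2 = (j.val + l.val) % 2 := by
  rw [ZMod.val_add]
  exact Nat.mod_mod_of_dvd _ ⟨n, rfl⟩

lemma sgn_add (j l : ZMod (2 * n)) : sgn m (j + l) = sgn m j * sgn m l := by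
  unfold sgn
  have h : (j + l).val % 2 = (j.val + l.val) % 2 := val_add_parity j l
  rcases Nat.mod_two_eq_zero_or_one j.val with hj | hj <;>
    rcases Nat.mod_two_eq_zero_or_one l.val with hl | hl <;>
      simp [h, Nat.add_mod, hj, hl]

lemma sgn_zero : sgn m (0 : ZMod (2 * n)) = 1 := by simp [sgn]

lemma sgn_neg (j : ZMod (2 * n)) : sgn m (-j) = sgn m j := by
  unfold sgn
  rcases eq_or_ne j 0 with rfl | hj
  · simp
  · have h1 : (-j).val = 2 * n - j.val := by
      rw [ZMod.neg_val]; simp [hj]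
    have h2 : j.val < 2 * n := j.val_lt
    have h3 : j.val ≠ 0 := fun h => hj (by rwa [← ZMod.val_eq_zero])
    have : (2 * n - j.val) % 2 = j.val % 2 := by omega
    rw [h1, this]

instance : One (Mc m n) := ⟨⟨0, 0⟩⟩
instance : Mul (Mc m n) := ⟨fun a b => ⟨a.x + sgn m a.y * b.x, a.y + b.y⟩⟩
instance : Inv (Mc m n) := ⟨fun a => ⟨-(sgn m a.y * a.x), -a.y⟩⟩

@[simp] lemma mul_def (a b : Mc m n) :
    a * b = ⟨a.x + sgn m a.y * b.x, a.y + b.y⟩ := rfl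

@[simp] lemma one_def : (1 : Mc m n) = ⟨0, 0⟩ := rfl

@[simp] lemma inv_def (a : Mc m n) : a⁻¹ = ⟨-(sgn m a.y * a.x), -a.y⟩ := rfl

@[simp] lemma one_x : (1 : Mc m n).x = 0 := rfl
@[simp] lemma one_y : (1 : Mc m n).y = 0 := rfl

instance : Group (Mc m n) where
  mul_assoc a b c := by
    simp only [mul_def, sgn_add]
    exact Mc.ext (by ring) (add_assoc _ _ _)
  one_mul a := by simp [sgn_zero]
  mul_one a := by simp
  inv_mul_cancel a := by
    simp only [mul_def, inv_def, one_def, sgn_neg]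
    exact Mc.ext (by ring) (by ring)

lemma powA (x : ZMod m) (k : ℕ) : (⟨x, 0⟩ : Mc m n) ^ k = ⟨k * x, 0⟩ := by
  induction k with
  | zero => simp
  | succ k ih =>
    rw [pow_succ, ih, mul_def]
    simp only [sgn_zero, one_mul]
    congr 1
    · push_cast; ring
    · simp

lemma powB (y : ZMod (2 * n)) (k : ℕ) : (⟨0, y⟩ : Mc m n) ^ k = ⟨0, k * y⟩ := by
  induction k with
  | zero => simp
  | succ k ih =>
    rw [pow_succ, ih, mul_def]
    congr 1
    · simp
    · push_cast; ring

end group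

section pres

variable (m n : ℕ)

/-- abbreviation for the presented group -/
local notation "P" => PresentedGroup (mRels m n)

def A : P := PresentedGroup.of 0
def B : P := PresentedGroup.of 1

lemma rel_mem_one {r : FreeGroup (Fin 2)} (hr : r ∈ mRels m n) :
    PresentedGroup.mk (mRels m n) r = 1 := by
  exact (QuotientGroup.eq_one_iff r).2 (Subgroup.subset_normalClosure hr)

lemma relA : (A m n) ^ m = 1 := by
  have := rel_mem_one m n (r := (FreeGroup.of 0) ^ m) (by left; rfl)
  rwa [map_pow] at this

lemma relB : (B m n) ^ (2 * n) = 1 := by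
  have := rel_mem_one m n (r := (FreeGroup.of 1) ^ (2 * n)) (by right; left; rfl)
  rwa [map_pow] at this

lemma relC : B m n * A m n * (B m n)⁻¹ = (A m n)⁻¹ := by
  have := rel_mem_one m n
    (r := FreeGroup.of 1 * FreeGroup.of 0 * (FreeGroup.of 1)⁻¹ * FreeGroup.of 0)
    (by right; right; rfl)
  simp only [map_mul, map_inv] at this
  have h := mul_eq_one_iff_eq_inv.mp this
  exact h

lemma sgn_one [NeZero n] : sgn m (1 : ZMod (2 * n)) = -1 := by
  have h : (1 : ZMod (2 * n)).val = 1 := by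
    rw [ZMod.val_one_eq_one_mod]
    exact Nat.mod_eq_of_lt (by have := NeZero.ne n; omega)
  simp [sgn, h]

section phi

variable [NeZero m] [NeZero n]

/-- the map on generators -/
def fgen : Fin 2 → Mc m n := ![⟨1, 0⟩, ⟨0, 1⟩]

lemma fgen_rels : ∀ r ∈ mRels m n, FreeGroup.lift (fgen m n) r = 1 := by
  intro r hr
  rcases hr with rfl | rfl | rfl
  · rw [map_pow, FreeGroup.lift_apply_of]
    show (⟨1, 0⟩ : Mc m n) ^ m = 1
    rw [powA]
    simp
  · rw [map_pow, FreeGroup.lift_apply_of]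
    show (⟨0, 1⟩ : Mc m n) ^ (2 * n) = 1
    rw [powB]
    simp
  · simp only [map_mul, map_inv, FreeGroup.lift_apply_of]
    show (⟨0, 1⟩ : Mc m n) * ⟨1, 0⟩ * (⟨0, 1⟩ : Mc m n)⁻¹ * ⟨1, 0⟩ = 1
    simp [sgn_one, sgn_zero, sgn_neg]

/-- the homomorphism from the presented group to the concrete group -/
def phi : PresentedGroup (mRels m n) →* Mc m n :=
  PresentedGroup.toGroup (fgen_rels m n)

@[simp] lemma phi_A : phi m n (A m n) = ⟨1, 0⟩ := PresentedGroup.toGroup.of _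
@[simp] lemma phi_B : phi m n (B m n) = ⟨0, 1⟩ := PresentedGroup.toGroup.of _

lemma phi_surj : Function.Surjective (phi m n) := by
  intro d
  refine ⟨A m n ^ (d.x.val) * B m n ^ (d.y.val), ?_⟩
  rw [map_mul, map_pow, map_pow, phi_A, phi_B, powA, powB]
  simp only [mul_def, sgn_zero]
  exact Mc.ext (by simp [ZMod.natCast_val, ZMod.cast_id]) (by simp [ZMod.natCast_val, ZMod.cast_id])

end phi

section nf

variable [NeZero m] [NeZero n] (hn : 1 ≤ n)

lemma key_comm (x : ℤ) : B m n * A m n ^ x = A m n ^ (-x) * B m n := by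
  have h : B m n * A m n ^ x * (B m n)⁻¹ = (B m n * A m n * (B m n)⁻¹) ^ x := by
    rw [conj_zpow]
  rw [relC, inv_zpow'] at h
  calc B m n * A m n ^ x = B m n * A m n ^ x * (B m n)⁻¹ * B m n := by group
  _ = A m n ^ (-x) * B m n := by rw [h]

lemma key_comm_pow (y : ℕ) (x : ℤ) :
    B m n ^ y * A m n ^ x = A m n ^ ((-1 : ℤ) ^ y * x) * B m n ^ y := by
  induction y generalizing x with
  | zero => simp
  | succ y ih =>
    rw [pow_succ, mul_assoc, key_comm, ← mul_assoc, ih, ← mul_assoc, pow_succ]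
    ring_nf

lemma exists_form (p : PresentedGroup (mRels m n)) :
    ∃ (x : ℤ) (y : ℕ), p = A m n ^ x * B m n ^ y := by
  let K : Subgroup (PresentedGroup (mRels m n)) :=
    { carrier := {p | ∃ (x : ℤ) (y : ℕ), p = A m n ^ x * B m n ^ y}
      one_mem' := ⟨0, 0, by simp⟩
      mul_mem' := by
        rintro a b ⟨x, y, rfl⟩ ⟨z, w, rfl⟩
        refine ⟨x + (-1 : ℤ) ^ y * z, y + w, ?_⟩
        rw [show A m n ^ x * B m n ^ y * (A m n ^ z * B m n ^ w)
            = A m n ^ x * (B m n ^ y * A m n ^ z) * B m n ^ w by group,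
          key_comm_pow, zpow_add]
        group
      inv_mem' := by
        rintro a ⟨x, y, rfl⟩
        have hy : y ≤ 2 * n * y := Nat.le_mul_of_pos_left y (by have := NeZero.ne n; omega)
        obtain ⟨c, hc⟩ : ∃ c, c + y = 2 * n * y := ⟨2 * n * y - y, by omega⟩
        have hBy : (B m n ^ y)⁻¹ = B m n ^ c := by
          refine (eq_inv_of_mul_eq_one_left ?_).symm
          rw [← pow_add, hc, pow_mul, relB, one_pow]
        refine ⟨(-1 : ℤ) ^ c * (-x), c, ?_⟩
        rw [mul_inv_rev, hBy, ← zpow_neg, key_comm_pow] }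
  suffices h : p ∈ K from h
  exact PresentedGroup.generated_by _ K (by
    intro j
    fin_cases j
    · exact ⟨1, 0, by simp [A]⟩
    · exact ⟨0, 1, by simp [B]⟩) p

lemma zpowA (x : ℤ) : (⟨1, 0⟩ : Mc m n) ^ x = ⟨(x : ZMod m), 0⟩ := by
  rcases x with k | k
  · rw [Int.ofNat_eq_coe, zpow_natCast, powA]
    simp
  · rw [zpow_negSucc, powA]
    simp only [inv_def, sgn_zero, one_mul, neg_zero]
    exact Mc.ext (by push_cast; ring) rfl

lemma phi_inj : Function.Injective (phi m n) := by
  intro p q h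
  obtain ⟨x, y, rfl⟩ := exists_form m n p
  obtain ⟨z, w, rfl⟩ := exists_form m n q
  rw [map_mul, map_mul, map_zpow, map_zpow, map_pow, map_pow, phi_A, phi_B,
    zpowA, zpowA, powB, powB] at h
  simp only [mul_def, sgn_zero, one_mul, mul_one, mul_zero, add_zero, zero_add,
    Mc.mk.injEq] at h
  obtain ⟨h1, h2⟩ := h
  have hA : A m n ^ x = A m n ^ z := by
    obtain ⟨t, ht⟩ : (m : ℤ) ∣ z - x := ((ZMod.intCast_eq_intCast_iff x z m).mp h1).dvd
    have hz : z = x + m * t := by linarith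
    rw [hz, zpow_add, zpow_mul, zpow_natCast, relA, one_zpow, mul_one]
  have hB : B m n ^ y = B m n ^ w := by
    have hmod : y ≡ w [MOD 2 * n] := (ZMod.natCast_eq_natCast_iff y w (2 * n)).mp h2
    have hord : orderOf (B m n) ∣ 2 * n := orderOf_dvd_of_pow_eq_one (relB m n)
    exact (pow_eq_pow_iff_modEq).mpr (hmod.of_dvd hord)
  rw [hA, hB]

/-- the group isomorphism -/
noncomputable def mcEquiv : PresentedGroup (mRels m n) ≃* Mc m n :=
  MulEquiv.ofBijective (phi m n) ⟨phi_inj m n, phi_surj m n⟩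

end nf

end pres

section graphs

lemma mem_center_mulEquiv {G H : Type*} [Group G] [Group H] (e : G ≃* H) (g : G) :
    e g ∈ Subgroup.center H ↔ g ∈ Subgroup.center G := by
  simp only [Subgroup.mem_center_iff]
  constructor
  · intro h k
    apply e.injective
    rw [map_mul, map_mul, h (e k)]
  · intro h k
    obtain ⟨k, rfl⟩ := e.surjective k
    rw [← map_mul, ← map_mul, h k]

/-- A group isomorphism induces an isomorphism of non-commuting graphs. -/
noncomputable def noncommGraphIsoOfMulEquiv {G H : Type*} [Group G] [Group H] (e : G ≃* H) :
    noncommGraph G ≃g noncommGraph H where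
  toEquiv := e.toEquiv.subtypeEquiv fun g => not_congr (mem_center_mulEquiv e g).symm
  map_rel_iff' := by
    intro u v
    show (e u.1 * e v.1 ≠ e v.1 * e u.1) ↔ (u.1 * v.1 ≠ v.1 * u.1)
    rw [← map_mul, ← map_mul]
    exact not_congr e.injective.eq_iff

/-- A graph whose adjacency is given by a "part" function is a complete multipartite graph. -/
noncomputable def isoMultipartite {V : Type*} (G : SimpleGraph V) {k : ℕ} (P : V → Fin k)
    (hP : ∀ u v, G.Adj u v ↔ P u ≠ P v) (sizes : Fin k → ℕ)
    (hcard : ∀ i, Nonempty ({v // P v = i} ≃ Fin (sizes i))) :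
    G ≃g SimpleGraph.completeMultipartiteGraph (fun i => Fin (sizes i)) where
  toEquiv := (Equiv.sigmaFiberEquiv P).symm.trans
    (Equiv.sigmaCongrRight fun i => (hcard i).some)
  map_rel_iff' := by
    intro u v
    show (¬ _) ↔ _
    rw [hP]
    simp [Equiv.sigmaFiberEquiv, Equiv.sigmaCongrRight]

end graphs

section center

variable {m n : ℕ}

lemma sgn_eq_one {j : ZMod (2 * n)} (hp : j.val % 2 = 0) : sgn m j = 1 := by simp [sgn, hp]

lemma sgn_eq_neg_one {j : ZMod (2 * n)} (hp : j.val % 2 = 1) : sgn m j = -1 := by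
  simp [sgn, hp]

lemma neg_one_ne_one (hm : 2 < m) : (-1 : ZMod m) ≠ 1 := by
  haveI : NeZero m := ⟨by omega⟩
  intro hc
  have h2 : ((2 : ℕ) : ZMod m) = 0 := by push_cast; linear_combination -hc
  have := (ZMod.natCast_eq_zero_iff 2 m).mp h2
  have := Nat.le_of_dvd (by norm_num) this
  omega

lemma mem_center_iff [NeZero n] (hm : 2 < m) (a : Mc m n) :
    a ∈ Subgroup.center (Mc m n) ↔ 2 * a.x = 0 ∧ a.y.val % 2 = 0 := by
  rw [Subgroup.mem_center_iff]
  constructor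
  · intro hc
    have h1 := hc ⟨0, 1⟩
    have h2 := hc ⟨1, 0⟩
    rw [mul_def, mul_def, Mc.mk.injEq, sgn_one] at h1
    rw [mul_def, mul_def, Mc.mk.injEq, sgn_zero] at h2
    constructor
    · have h1c : (0 : ZMod m) + -1 * a.x = a.x + sgn m a.y * 0 := h1.1
      linear_combination -h1c
    · rcases Nat.mod_two_eq_zero_or_one a.y.val with hp | hp
      · exact hp
      · exfalso
        rw [sgn_eq_neg_one hp] at h2
        have h2c : (1 : ZMod m) + 1 * a.x = a.x + -1 * 1 := h2.1
        exact neg_one_ne_one hm (by linear_combination -h2c)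
  · rintro ⟨h1, h2⟩ ⟨k, l⟩
    rw [mul_def, mul_def, Mc.mk.injEq, sgn_eq_one h2]
    refine ⟨?_, add_comm _ _⟩
    rcases Nat.mod_two_eq_zero_or_one l.val with hp | hp
    · rw [sgn_eq_one hp]; ring
    · rw [sgn_eq_neg_one hp]; linear_combination -h1

end center

section counting

variable {h n : ℕ}

lemma two_mul_eq_iff (hh : 0 < h) (i k : ZMod (2 * h)) :
    2 * i = 2 * k ↔ i.val % h = k.val % h := by
  haveI : NeZero (2 * h) := ⟨by omega⟩
  have ri : ∀ a : ZMod (2 * h), ((a.val : ℕ) : ZMod (2 * h)) = a :=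
    ZMod.natCast_rightInverse
  have step1 : 2 * i = 2 * k ↔
      ((2 * i.val : ℕ) : ZMod (2 * h)) = ((2 * k.val : ℕ) : ZMod (2 * h)) := by
    push_cast
    rw [ri, ri]
  rw [step1, ZMod.natCast_eq_natCast_iff]
  unfold Nat.ModEq
  rw [Nat.mul_mod_mul_left, Nat.mul_mod_mul_left]
  omega

/-- the two elements of `ZMod (2h)` with given residue mod `h` -/
def fibEquivX (hh : 0 < h) (r : ℕ) (hr : r < h) :
    {x : ZMod (2 * h) // x.val % h = r} ≃ Fin 2 :=
  letI : NeZero (2 * h) := ⟨by omega⟩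
  { toFun := fun x => ⟨x.1.val / h, by
      rw [Nat.div_lt_iff_lt_mul hh]
      exact x.1.val_lt⟩
    invFun := fun t =>
      ⟨((r + t.val * h : ℕ) : ZMod (2 * h)), by
        have ht : t.val < 2 := t.isLt
        have hb : r + t.val * h < 2 * h := by
          have : t.val * h ≤ 1 * h := Nat.mul_le_mul_right h (by omega)
          omega
        rw [ZMod.val_natCast_of_lt hb, Nat.add_mul_mod_self_right]
        exact Nat.mod_eq_of_lt hr⟩
    left_inv := by
      rintro ⟨x, hx⟩
      have ri : ((x.val : ℕ) : ZMod (2 * h)) = x := ZMod.natCast_rightInverse x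
      apply Subtype.ext
      show ((r + x.val / h * h : ℕ) : ZMod (2 * h)) = x
      conv_rhs => rw [← ri]
      congr 1
      rw [← hx]
      exact Nat.mod_add_div' x.val h
    right_inv := by
      intro t
      have ht : t.val < 2 := t.isLt
      have hb : r + t.val * h < 2 * h := by
        have : t.val * h ≤ 1 * h := Nat.mul_le_mul_right h (by omega)
        omega
      apply Fin.ext
      show ((r + t.val * h : ℕ) : ZMod (2 * h)).val / h = t.val
      rw [ZMod.val_natCast_of_lt hb, Nat.add_mul_div_right _ _ hh, Nat.div_eq_of_lt hr,
        zero_add] }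

/-- the noncentral `x`-part (residue mod `h` nonzero) is `Fin (h-1) × Fin 2` -/
def xNEquiv (hh : 0 < h) :
    {x : ZMod (2 * h) // ¬ x.val % h = 0} ≃ Fin (h - 1) × Fin 2 :=
  letI : NeZero (2 * h) := ⟨by omega⟩
  { toFun := fun x =>
      (⟨x.1.val % h - 1, by have := Nat.mod_lt x.1.val hh; have := x.2; omega⟩,
       ⟨x.1.val / h, by
        rw [Nat.div_lt_iff_lt_mul hh]
        exact x.1.val_lt⟩)
    invFun := fun p =>
      ⟨((p.1.val + 1 + p.2.val * h : ℕ) : ZMod (2 * h)), by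
        have h1 : p.1.val < h - 1 := p.1.isLt
        have h2 : p.2.val < 2 := p.2.isLt
        have hq : p.2.val * h ≤ 1 * h := Nat.mul_le_mul_right h (by omega)
        have hb : p.1.val + 1 + p.2.val * h < 2 * h := by omega
        rw [ZMod.val_natCast_of_lt hb, Nat.add_mul_mod_self_right]
        rw [Nat.mod_eq_of_lt (by omega)]
        omega⟩
    left_inv := by
      rintro ⟨x, hx⟩
      have ri : ((x.val : ℕ) : ZMod (2 * h)) = x := ZMod.natCast_rightInverse x
      apply Subtype.ext
      show ((x.val % h - 1 + 1 + x.val / h * h : ℕ) : ZMod (2 * h)) = x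
      conv_rhs => rw [← ri]
      congr 1
      have hmd := Nat.mod_add_div' x.val h
      have hne : x.val % h ≠ 0 := hx
      set q := x.val / h * h with hq
      omega
    right_inv := by
      rintro ⟨p, t⟩
      have h1 : p.val < h - 1 := p.isLt
      have h2 : t.val < 2 := t.isLt
      have hq : t.val * h ≤ 1 * h := Nat.mul_le_mul_right h (by omega)
      have hb : p.val + 1 + t.val * h < 2 * h := by omega
      have hv : ((p.val + 1 + t.val * h : ℕ) : ZMod (2 * h)).val = p.val + 1 + t.val * h :=
        ZMod.val_natCast_of_lt hb
      apply Prod.ext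
      · apply Fin.ext
        show ((p.val + 1 + t.val * h : ℕ) : ZMod (2 * h)).val % h - 1 = p.val
        rw [hv, Nat.add_mul_mod_self_right, Nat.mod_eq_of_lt (by omega)]
        omega
      · apply Fin.ext
        show ((p.val + 1 + t.val * h : ℕ) : ZMod (2 * h)).val / h = t.val
        rw [hv, Nat.add_mul_div_right _ _ hh, Nat.div_eq_of_lt (by omega), zero_add] }

/-- elements of `ZMod (2n)` with given parity form a `Fin n` -/
def parityEquivY (hn : 0 < n) (b : ℕ) (hb : b < 2) :
    {y : ZMod (2 * n) // y.val % 2 = b} ≃ Fin n :=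
  letI : NeZero (2 * n) := ⟨by omega⟩
  { toFun := fun y => ⟨y.1.val / 2, by have := y.1.val_lt; omega⟩
    invFun := fun k =>
      ⟨((b + k.val * 2 : ℕ) : ZMod (2 * n)), by
        have hk : k.val < n := k.isLt
        rw [ZMod.val_natCast_of_lt (by omega)]
        omega⟩
    left_inv := by
      rintro ⟨y, hy⟩
      have ri : ((y.val : ℕ) : ZMod (2 * n)) = y := ZMod.natCast_rightInverse y
      apply Subtype.ext
      show ((b + y.val / 2 * 2 : ℕ) : ZMod (2 * n)) = y
      conv_rhs => rw [← ri]
      congr 1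
      omega
    right_inv := by
      intro k
      have hk : k.val < n := k.isLt
      apply Fin.ext
      show ((b + k.val * 2 : ℕ) : ZMod (2 * n)).val / 2 = k.val
      rw [ZMod.val_natCast_of_lt (by omega)]
      omega }

end counting

section main

variable {h n : ℕ} [NeZero n]

lemma mem_center_iff' (hh : 2 ≤ h) (a : Mc (2 * h) n) :
    a ∈ Subgroup.center (Mc (2 * h) n) ↔ a.x.val % h = 0 ∧ a.y.val % 2 = 0 := by
  haveI : NeZero (2 * h) := ⟨by omega⟩
  rw [mem_center_iff (by omega)]
  have h2 : 2 * a.x = 0 ↔ a.x.val % h = 0 := by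
    have := two_mul_eq_iff (by omega : 0 < h) a.x 0
    rw [mul_zero, ZMod.val_zero, Nat.zero_mod] at this
    exact this
  rw [h2]

/-- the partition function for the non-commuting graph -/
def partFun (hh : 2 ≤ h) (v : {g : Mc (2 * h) n // g ∉ Subgroup.center (Mc (2 * h) n)}) :
    Fin (h + 1) :=
  if v.1.y.val % 2 = 0 then 0
  else ⟨v.1.x.val % h + 1, by have := Nat.mod_lt v.1.x.val (show 0 < h by omega); omega⟩

lemma adj_iff (hh : 2 ≤ h)
    (u v : {g : Mc (2 * h) n // g ∉ Subgroup.center (Mc (2 * h) n)}) :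
    (noncommGraph (Mc (2 * h) n)).Adj u v ↔ partFun hh u ≠ partFun hh v := by
  show ¬ (u.1 * v.1 = v.1 * u.1) ↔ ¬ (partFun hh u = partFun hh v)
  apply not_congr
  obtain ⟨⟨i, j⟩, hu⟩ := u
  obtain ⟨⟨k, l⟩, hv⟩ := v
  rw [mem_center_iff' hh] at hu hv
  simp only [not_and_or] at hu hv
  have hcomm : (⟨i, j⟩ : Mc (2 * h) n) * ⟨k, l⟩ = ⟨k, l⟩ * ⟨i, j⟩ ↔
      i + sgn (2 * h) j * k = k + sgn (2 * h) l * i := by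
    rw [mul_def, mul_def, Mc.mk.injEq, and_iff_left (add_comm j l)]
  rw [hcomm]
  unfold partFun
  simp only
  rcases Nat.mod_two_eq_zero_or_one j.val with hj | hj <;>
    rcases Nat.mod_two_eq_zero_or_one l.val with hl | hl
  · -- both even: commute, same part
    rw [sgn_eq_one hj, sgn_eq_one hl, if_pos hj, if_pos hl]
    exact iff_of_true (by ring) rfl
  · -- j even, l odd : don't commute, different parts
    rw [sgn_eq_one hj, sgn_eq_neg_one hl, if_pos hj, if_neg (by omega)]
    have hi2 : ¬ i.val % h = 0 := by
      rcases hu with h' | h'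
      · exact h'
      · exact absurd hj h'
    refine iff_of_false (fun e => ?_) (fun e => ?_)
    · have : 2 * i = 2 * 0 := by rw [mul_zero]; linear_combination e
      rw [two_mul_eq_iff (by omega : 0 < h), ZMod.val_zero, Nat.zero_mod] at this
      exact hi2 this
    · have := Fin.ext_iff.mp e
      simp only [Fin.val_zero] at this
      omega
  · -- j odd, l even
    rw [sgn_eq_neg_one hj, sgn_eq_one hl, if_neg (by omega), if_pos hl]
    have hk2 : ¬ k.val % h = 0 := by
      rcases hv with h' | h'
      · exact h'
      · exact absurd hl h'
    refine iff_of_false (fun e => ?_) (fun e => ?_)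
    · have : 2 * k = 2 * 0 := by rw [mul_zero]; linear_combination -e
      rw [two_mul_eq_iff (by omega : 0 < h), ZMod.val_zero, Nat.zero_mod] at this
      exact hk2 this
    · have := Fin.ext_iff.mp e
      simp only [Fin.val_zero] at this
      omega
  · -- both odd
    rw [sgn_eq_neg_one hj, sgn_eq_neg_one hl, if_neg (by omega), if_neg (by omega)]
    have step : i + -1 * k = k + -1 * i ↔ 2 * i = 2 * k :=
      ⟨fun e => by linear_combination e, fun e => by linear_combination e⟩
    rw [step, two_mul_eq_iff (by omega : 0 < h)]
    constructor
    · intro e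
      exact Fin.ext (by show i.val % h + 1 = k.val % h + 1; omega)
    · intro e
      have := Fin.ext_iff.mp e
      simp only at this
      omega

/-- fiber over the zero part -/
def fiber0Equiv (hh : 2 ≤ h) :
    {v : {g : Mc (2 * h) n // g ∉ Subgroup.center (Mc (2 * h) n)} // partFun hh v = 0} ≃
      {x : ZMod (2 * h) // ¬ x.val % h = 0} × {y : ZMod (2 * n) // y.val % 2 = 0} where
  toFun w := by
    refine (⟨w.1.1.x, ?_⟩, ⟨w.1.1.y, ?_⟩)
    · have hw := w.2
      unfold partFun at hw
      by_cases hp : w.1.1.y.val % 2 = 0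
      · intro hx
        exact w.1.2 ((mem_center_iff' hh w.1.1).mpr ⟨hx, hp⟩)
      · rw [if_neg hp] at hw
        exact absurd (Fin.ext_iff.mp hw) (by simp)
    · by_cases hp : w.1.1.y.val % 2 = 0
      · exact hp
      · have hw := w.2
        unfold partFun at hw
        rw [if_neg hp] at hw
        exact absurd (Fin.ext_iff.mp hw) (by simp)
  invFun p :=
    ⟨⟨⟨p.1.1, p.2.1⟩, fun hc => p.1.2 ((mem_center_iff' hh _).mp hc).1⟩, by
      unfold partFun
      rw [if_pos p.2.2]⟩
  left_inv w := by
    apply Subtype.ext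
    apply Subtype.ext
    rfl
  right_inv p := rfl

/-- fiber over a nonzero part -/
def fiberEquiv (hh : 2 ≤ h) (i : Fin (h + 1)) (hi : i ≠ 0) :
    {v : {g : Mc (2 * h) n // g ∉ Subgroup.center (Mc (2 * h) n)} // partFun hh v = i} ≃
      {x : ZMod (2 * h) // x.val % h = i.val - 1} × {y : ZMod (2 * n) // y.val % 2 = 1} where
  toFun w := by
    have hp : ¬ w.1.1.y.val % 2 = 0 := by
      intro hp
      have hw := w.2
      unfold partFun at hw
      rw [if_pos hp] at hw
      exact hi hw.symm
    have hw := w.2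
    unfold partFun at hw
    rw [if_neg hp] at hw
    have hval : w.1.1.x.val % h + 1 = i.val := Fin.ext_iff.mp hw
    exact (⟨w.1.1.x, by omega⟩, ⟨w.1.1.y, by omega⟩)
  invFun p :=
    ⟨⟨⟨p.1.1, p.2.1⟩, fun hc => by
        have h0 : p.2.1.val % 2 = 0 := ((mem_center_iff' hh _).mp hc).2
        have hp := p.2.2
        omega⟩, by
      unfold partFun
      rw [if_neg (show ¬ p.2.1.val % 2 = 0 from by have := p.2.2; omega)]
      apply Fin.ext
      show p.1.1.val % h + 1 = i.val
      have h1 : p.1.1.val % h = i.val - 1 := p.1.2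
      have h2 : i.val ≠ 0 := fun hc => hi (Fin.ext hc)
      omega⟩
  left_inv w := by
    apply Subtype.ext
    apply Subtype.ext
    rfl
  right_inv p := by
    apply Prod.ext <;> exact Subtype.ext rfl

end main

end NCGaux

/-- For `m > 2` even and `n ≥ 1`, the non-commuting graph of the metacyclic group `M_{2mn}`
is the complete `(m/2+1)`-partite graph `K_{(m/2-1)·2n,2n,…,2n}` with `m/2` parts of
size `2n`. -/
theorem noncommGraph_metacyclic_even (m n : ℕ) (hm : 2 < m) (heven : Even m) (hn : 1 ≤ n) :
    Nonempty (noncommGraph (PresentedGroup (mRels m n)) ≃g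
      SimpleGraph.completeMultipartiteGraph
        fun i : Fin (m / 2 + 1) => Fin (if i = 0 then (m / 2 - 1) * (2 * n) else 2 * n)) := by
  obtain ⟨h, hm'⟩ : ∃ h, m = 2 * h := by
    obtain ⟨c, hc⟩ := heven; exact ⟨c, by omega⟩
  subst hm'
  haveI : NeZero n := ⟨by omega⟩
  haveI : NeZero (2 * h) := ⟨by omega⟩
  have hh : 2 ≤ h := by omega
  have hdiv : 2 * h / 2 = h := by omega
  rw [hdiv]
  refine ⟨(NCGaux.noncommGraphIsoOfMulEquiv (NCGaux.mcEquiv (2 * h) n)).trans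
    (NCGaux.isoMultipartite _ (NCGaux.partFun hh) (NCGaux.adj_iff hh)
      (fun i => if i = 0 then (h - 1) * (2 * n) else 2 * n) ?_)⟩
  intro i
  by_cases hi : i = 0
  · subst hi
    simp only [if_pos]
    refine ⟨((NCGaux.fiber0Equiv hh).trans
      (Equiv.prodCongr (NCGaux.xNEquiv (by omega))
        (NCGaux.parityEquivY (by omega) 0 (by omega)))).trans ?_⟩
    exact ((Equiv.prodCongr finProdFinEquiv (Equiv.refl _)).trans finProdFinEquiv).trans
      (finCongr (by ring))
  · refine ⟨((NCGaux.fiberEquiv hh i hi).trans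
      (Equiv.prodCongr
        (NCGaux.fibEquivX (by omega) (i.val - 1)
          (by have h1 := i.isLt; have h2 : i.val ≠ 0 := fun hc => hi (Fin.ext hc); omega))
        (NCGaux.parityEquivY (by omega) 1 (by omega)))).trans ?_⟩
    exact finProdFinEquiv.trans (finCongr (by simp [hi]))
end

section
/- For $m > 2$ odd, the distance spectrum of $K_{(m-1)n, n, \ldots, n}$ (with $m$ parts of size $n$; the non-commuting graph of $M_{2mn}$) consists of $-2$ with multiplicity $2mn - (m+n) - 1$, $n-2$ with multiplicity $m-1$, and the two simple eigenvalues $\frac{-(4+n-3mn) \pm n\sqrt{5m^2-10m+9}}{2}$. -/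
open Polynomial

/-- The distance matrix of a graph, with real entries. -/
noncomputable def distMatrix {V : Type*} [Fintype V] (G : SimpleGraph V) : Matrix V V ℝ :=
  Matrix.of fun u v => (G.dist u v : ℝ)

open Matrix Finset

lemma det_smul_one_sub_ones {K : Type*} [Field K] {β : Type*} [Fintype β] [DecidableEq β]
    (a : K) (ha : a ≠ 0) (hb : 1 ≤ Fintype.card β) :
    (a • (1 : Matrix β β K) - Matrix.of fun _ _ => (1:K)).det
      = a ^ (Fintype.card β - 1) * (a - Fintype.card β) := by
  have h1 : a • (1 : Matrix β β K) - Matrix.of (fun _ _ => (1:K))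
      = a • ((1 : Matrix β β K) +
          Matrix.replicateCol Unit (fun _ : β => -a⁻¹) * Matrix.replicateRow Unit (fun _ : β => (1:K))) := by
    ext i j
    by_cases h : i = j
    · subst h
      simp [Matrix.mul_apply, Matrix.one_apply, mul_add, ha]
      ring
    · simp [Matrix.mul_apply, Matrix.one_apply, h, mul_add, ha]
  rw [h1, Matrix.det_smul, Matrix.det_one_add_replicateCol_mul_replicateRow]
  obtain ⟨k, hk⟩ : ∃ k, Fintype.card β = k + 1 := ⟨Fintype.card β - 1, by omega⟩
  rw [hk]
  simp only [dotProduct, Finset.sum_const, Finset.card_univ, hk, nsmul_eq_mul, one_mul,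
    Nat.add_sub_cancel]
  push_cast
  field_simp
  ring

def sigmaFinEquiv {m : ℕ} (sizes : Fin (m+1) → ℕ) (i : Fin (m+1)) :
    {u : Σ j, Fin (sizes j) // u.1 = i} ≃ Fin (sizes i) where
  toFun u := Fin.cast (congrArg sizes u.2) u.1.2
  invFun x := ⟨⟨i, x⟩, rfl⟩
  left_inv := fun ⟨⟨j, x⟩, h⟩ => by subst h; rfl
  right_inv := fun x => rfl

lemma card_sigma_subtype {m : ℕ} (sizes : Fin (m+1) → ℕ) (i : Fin (m+1)) :
    Fintype.card {u : Σ j, Fin (sizes j) // u.1 = i} = sizes i := by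
  rw [Fintype.card_congr (sigmaFinEquiv sizes i), Fintype.card_fin]

lemma det_blockA {K : Type*} [Field K] {m : ℕ} (sizes : Fin (m+1) → ℕ)
    (hs : ∀ i, 1 ≤ sizes i) (a : K) (ha : a ≠ 0) :
    (Matrix.of fun u v : Σ j, Fin (sizes j) =>
        (if u = v then a else 0) - (if u.1 = v.1 then (1:K) else 0)).det
      = ∏ i, a ^ (sizes i - 1) * (a - sizes i) := by
  set A : Matrix (Σ j, Fin (sizes j)) (Σ j, Fin (sizes j)) K :=
    Matrix.of fun u v => (if u = v then a else 0) - (if u.1 = v.1 then (1:K) else 0) with hA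
  have hbt : A.BlockTriangular Sigma.fst := by
    intro u v h
    have h1 : u ≠ v := fun e => absurd (congrArg Sigma.fst e) (by exact fun e' => absurd e' h.ne')
    have h2 : u.1 ≠ v.1 := h.ne'
    simp [hA, h1, h2]
  rw [hbt.det]
  have himg : (univ : Finset (Σ j, Fin (sizes j))).image Sigma.fst = univ := by
    apply Finset.eq_univ_of_forall
    intro i
    exact Finset.mem_image.2 ⟨⟨i, ⟨0, hs i⟩⟩, Finset.mem_univ _, rfl⟩
  rw [himg]
  refine Finset.prod_congr rfl fun i _ => ?_
  have hblock : A.toSquareBlock Sigma.fst i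
      = a • (1 : Matrix {u : Σ j, Fin (sizes j) // u.1 = i} _ K) - Matrix.of fun _ _ => (1:K) := by
    ext u v
    have hu : u.val.1 = i := u.2
    have hv : v.val.1 = i := v.2
    have h12 : u.val.1 = v.val.1 := hu.trans hv.symm
    by_cases h : u = v
    · subst h
      simp [Matrix.toSquareBlock_def, hA, Matrix.one_apply]
    · have h' : u.val ≠ v.val := fun e => h (Subtype.ext e)
      simp [Matrix.toSquareBlock_def, hA, h', h12, Matrix.one_apply, h]
  rw [hblock, det_smul_one_sub_ones a ha (by rw [card_sigma_subtype]; exact hs i),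
    card_sigma_subtype]

lemma det_E {K : Type*} [Field K] {m : ℕ} (sizes : Fin (m+1) → ℕ)
    (hs : ∀ i, 1 ≤ sizes i) (a : K) (ha : a ≠ 0) (hai : ∀ i, a - sizes i ≠ 0) :
    (Matrix.of fun u v : Σ j, Fin (sizes j) =>
        (if u = v then a else 0) - (if u.1 = v.1 then (1:K) else 0) - 1).det
      = (∏ i, a ^ (sizes i - 1) * (a - sizes i))
          * (1 - ∑ i, (sizes i : K) * (a - sizes i)⁻¹) := by
  classical
  set V := Σ j, Fin (sizes j)
  set A : Matrix V V K :=
    Matrix.of fun u v => (if u = v then a else 0) - (if u.1 = v.1 then (1:K) else 0) with hA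
  set w : V → K := fun u => (a - sizes u.1)⁻¹ with hw
  have hsum : ∀ u : V, ∑ t : V, A u t * w t = 1 := by
    intro u
    have key : ∀ t : V, A u t * w t
        = (if t = u then a * w u else 0) - (if t.1 = u.1 then w t else 0) := by
      intro t
      by_cases h : t = u
      · subst h; simp [hA, hw, sub_mul]
      · have h' : ¬ u = t := fun e => h e.symm
        by_cases h2 : t.1 = u.1
        · have h2' : u.1 = t.1 := h2.symm
          simp only [hA, Matrix.of_apply, if_neg h', if_pos h2', if_neg h, if_pos h2]
          rw [hw]; simp only [h2]; ring
        · have h2' : ¬ u.1 = t.1 := fun e => h2 e.symm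
          simp [hA, h', h2', h, h2, sub_mul]
    rw [Finset.sum_congr rfl fun t _ => key t, Finset.sum_sub_distrib,
      Finset.sum_ite_eq' univ u (fun _ => a * w u)]
    have h2 : (∑ t : V, if t.1 = u.1 then w t else 0) = (sizes u.1 : K) * w u := by
      rw [← Finset.univ_sigma_univ, Finset.sum_sigma]
      have key2 : ∀ j, (∑ x : Fin (sizes j), if (⟨j, x⟩ : V).1 = u.1 then w ⟨j, x⟩ else 0)
          = if j = u.1 then (sizes j : K) * (a - sizes j)⁻¹ else 0 := by
        intro j
        by_cases h : j = u.1
        · simp [h, hw, Finset.sum_const, mul_comm]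
        · simp [h]
      rw [Finset.sum_congr rfl fun j _ => key2 j, Finset.sum_ite_eq' univ u.1]
      simp [hw]
    rw [h2]
    simp only [Finset.mem_univ, if_true, hw]
    rw [← sub_mul, mul_inv_eq_one₀ (hai u.1)]
  have hfact : (Matrix.of fun u v : V =>
        (if u = v then a else 0) - (if u.1 = v.1 then (1:K) else 0) - 1)
      = A * ((1 : Matrix V V K) +
          Matrix.replicateCol Unit (fun u => -w u) * Matrix.replicateRow Unit (fun _ : V => (1:K))) := by
    ext u v
    have hcr : (A * (Matrix.replicateCol Unit (fun u => -w u) * Matrix.replicateRow Unit (fun _ : V => (1:K)))) u v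
        = -1 := by
      rw [← Matrix.mul_assoc]
      simp only [Matrix.mul_apply, Matrix.replicateCol_apply, Matrix.replicateRow_apply, Finset.univ_unique,
        Finset.sum_singleton, mul_one, mul_neg]
      rw [Finset.sum_neg_distrib, hsum u]
    rw [Matrix.mul_add, Matrix.mul_one]
    rw [Matrix.add_apply, hcr]
    simp only [hA, Matrix.of_apply]
    ring
  rw [hfact, Matrix.det_mul, Matrix.det_one_add_replicateCol_mul_replicateRow, det_blockA sizes hs a ha]
  congr 1
  have hdot : ((fun _ : V => (1:K)) ⬝ᵥ fun u => -w u) = -∑ u : V, w u := by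
    simp [dotProduct]
  rw [hdot]
  have hws : (∑ u : V, w u) = ∑ i, (sizes i : K) * (a - sizes i)⁻¹ := by
    rw [← Finset.univ_sigma_univ, Finset.sum_sigma]
    exact Finset.sum_congr rfl fun i _ => by simp [hw, Finset.sum_const, mul_comm]
  rw [hws]; ring

lemma dist_cmg {m : ℕ} (sizes : Fin (m+1) → ℕ) (hs : ∀ i, 1 ≤ sizes i) (hm : 1 ≤ m)
    (u v : Σ j, Fin (sizes j)) :
    (SimpleGraph.completeMultipartiteGraph fun i => Fin (sizes i)).dist u v
      = if u = v then 0 else if u.1 = v.1 then 2 else 1 := by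
  set G := SimpleGraph.completeMultipartiteGraph fun i => Fin (sizes i) with hG
  have hadj : ∀ x y : Σ j, Fin (sizes j), G.Adj x y ↔ x.1 ≠ y.1 := by
    intro x y; simp [hG]
  by_cases h : u = v
  · simp [h]
  · by_cases h2 : u.1 = v.1
    · simp only [h, h2, if_false, if_true, if_neg h, if_pos h2]
      obtain ⟨j, hj⟩ : ∃ j : Fin (m+1), j ≠ u.1 := by
        refine ⟨if u.1 = 0 then ⟨1, by omega⟩ else 0, ?_⟩
        by_cases h0 : u.1 = 0
        · rw [if_pos h0, h0]; intro e; exact absurd (congrArg Fin.val e) (by simp)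
        · rw [if_neg h0]; exact fun e => h0 e.symm
      set t : Σ j, Fin (sizes j) := ⟨j, ⟨0, hs j⟩⟩ with ht
      have a1 : G.Adj u t := (hadj u t).2 (by simp [ht]; exact fun e => hj e.symm)
      have a2 : G.Adj t v := (hadj t v).2 (by simp [ht]; rw [h2] at hj; exact hj)
      set p : G.Walk u v := SimpleGraph.Walk.cons a1 (SimpleGraph.Walk.cons a2 SimpleGraph.Walk.nil)
      have hple := SimpleGraph.dist_le p
      have hlen : p.length = 2 := by simp [p]
      rw [hlen] at hple
      have h0 : G.dist u v ≠ 0 :=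
        SimpleGraph.dist_ne_zero_iff_ne_and_reachable.2 ⟨h, ⟨p⟩⟩
      have h1 : G.dist u v ≠ 1 := by
        intro e
        exact absurd ((hadj u v).1 (SimpleGraph.dist_eq_one_iff_adj.1 e)) (by simp [h2])
      omega
    · rw [if_neg h, if_neg h2]
      exact SimpleGraph.dist_eq_one_iff_adj.2 ((hadj u v).2 h2)

lemma key_alg {K : Type*} [Field K] (m n : ℕ) (hm : 2 < m) (hn : 1 ≤ n) (a : K)
    (ha : a ≠ 0) (h0 : a - (((m-1)*n : ℕ) : K) ≠ 0) (hN : a - (n : K) ≠ 0) :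
    (a ^ ((m-1)*n - 1) * (a - (((m-1)*n : ℕ) : K)))
      * (a ^ (n - 1) * (a - n)) ^ m
      * (1 - ((((m-1)*n : ℕ) : K) * (a - (((m-1)*n : ℕ) : K))⁻¹ + m * ((n:K) * (a - n)⁻¹)))
    = a ^ (2*m*n - (m+n) - 1) * (a - n) ^ (m - 1)
      * (a^2 - (3*(m:K) - 1)*n*a + ((m:K)-1)*((m:K)+2)*n^2) := by
  have hm1 : (1:ℕ) ≤ m := by omega
  have hcast : (((m-1)*n : ℕ) : K) = ((m:K)-1)*(n:K) := by
    push_cast [Nat.cast_sub hm1]; ring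
  have h0' : a - ((m:K)-1)*(n:K) ≠ 0 := by rwa [hcast] at h0
  have h2n : 2*n ≤ m*n := Nat.mul_le_mul_right n (by omega)
  have hmm : m ≤ m*n := Nat.le_mul_of_pos_right m (by omega)
  have he : (m-1)*n - 1 + (n-1)*m = 2*m*n - (m+n) - 1 := by
    have e1 : (m-1)*n = m*n - n := by rw [Nat.sub_one_mul]
    have e2 : (n-1)*m = m*n - m := by rw [Nat.sub_one_mul, mul_comm]
    rw [e1, e2, show 2*m*n = m*n + m*n by ring]; omega
  have expand : (a ^ (n-1) * (a - n)) ^ m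
      = a ^ ((n-1)*m) * ((a - n) ^ (m-1) * (a - n)) := by
    rw [mul_pow, ← pow_mul, pow_sub_one_mul (by omega : m ≠ 0)]
  have hfield : (a - ((m:K)-1)*n) * (a - n)
        * (1 - (((m:K)-1)*n * (a - ((m:K)-1)*n)⁻¹ + m * ((n:K) * (a - n)⁻¹)))
      = a^2 - (3*(m:K) - 1)*n*a + ((m:K)-1)*((m:K)+2)*n^2 := by
    field_simp
    ring
  rw [hcast, expand, ← hfield, ← he, pow_add]
  ring

/-- For `m > 2` odd, the distance spectrum of `K_{(m-1)n,n,…,n}` (with `m` parts of size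
`n`; the non-commuting graph of `M_{2mn}`) consists of `-2` with multiplicity
`2mn-(m+n)-1`, `n-2` with multiplicity `m-1`, and the two simple eigenvalues
`(-(4+n-3mn) ± n√(5m²-10m+9))/2`. -/
theorem distance_spectrum_metacyclic_odd (m n : ℕ) (hm : 2 < m) (hodd : Odd m)
    (hn : 1 ≤ n) :
    (distMatrix (SimpleGraph.completeMultipartiteGraph
        fun i : Fin (m + 1) => Fin (if i = 0 then (m - 1) * n else n))).charpoly =
      (X + 2) ^ (2 * m * n - (m + n) - 1) * (X - C ((n : ℝ) - 2)) ^ (m - 1) *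
        (X - C ((-(4 + (n : ℝ) - 3 * m * n) +
          n * Real.sqrt (5 * (m : ℝ) ^ 2 - 10 * m + 9)) / 2)) *
        (X - C ((-(4 + (n : ℝ) - 3 * m * n) -
          n * Real.sqrt (5 * (m : ℝ) ^ 2 - 10 * m + 9)) / 2)) := by
  classical
  have hm1 : (1:ℕ) ≤ m := by omega
  set sizes : Fin (m+1) → ℕ := fun i => if i = 0 then (m-1)*n else n with hsizes
  have hs : ∀ i, 1 ≤ sizes i := by
    intro i
    by_cases h : i = 0
    · simp only [hsizes, h, if_pos rfl]
      exact Nat.mul_pos (by omega) hn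
    · simp only [hsizes, if_neg h]; exact hn
  set D := distMatrix (SimpleGraph.completeMultipartiteGraph
      fun i : Fin (m + 1) => Fin (sizes i)) with hD
  apply RatFunc.algebraMap_injective ℝ
  set φ : Polynomial ℝ →+* RatFunc ℝ := (algebraMap (Polynomial ℝ) (RatFunc ℝ)) with hφ
  set a : RatFunc ℝ := φ X + 2 with haa
  have hx : φ X = a - 2 := by rw [haa]; ring
  have hXC : ∀ c : ℝ, (X : Polynomial ℝ) + C c ≠ 0 := by
    intro c h
    have := congrArg Polynomial.natDegree h
    simp [Polynomial.natDegree_X_add_C] at this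
  have hC2 : φ (C (2:ℝ)) = 2 := by
    rw [show (C (2:ℝ)) = (2:Polynomial ℝ) from _root_.map_ofNat C 2, _root_.map_ofNat φ 2]
  have hCn : ∀ k : ℕ, φ (C (k:ℝ)) = (k : RatFunc ℝ) := by
    intro k
    rw [show (C ((k:ℕ):ℝ)) = ((k:ℕ):Polynomial ℝ) from _root_.map_natCast C k, _root_.map_natCast φ k]
  have ha : a ≠ 0 := by
    have h1 : a = φ (X + C 2) := by
      rw [_root_.map_add, hC2]
    rw [h1]
    exact RatFunc.algebraMap_ne_zero (hXC 2)
  have hai : ∀ i : Fin (m+1), a - ((sizes i : ℕ) : RatFunc ℝ) ≠ 0 := by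
    intro i
    have h1 : a - (sizes i : RatFunc ℝ) = φ (X + C (2 - (sizes i : ℝ))) := by
      rw [_root_.map_add, show C ((2:ℝ) - ((sizes i : ℕ):ℝ)) = C 2 - C (((sizes i:ℕ)):ℝ) from _root_.map_sub C _ _,
        _root_.map_sub, hC2, hCn (sizes i), hx]
      ring
    rw [h1]
    exact RatFunc.algebraMap_ne_zero (hXC _)
  set ψ : ℝ →+* RatFunc ℝ := φ.comp Polynomial.C with hψdef
  have hψa : ∀ r : ℝ, φ (C r) = ψ r := fun r => rfl
  have hnn : (0:ℝ) ≤ 5*(m:ℝ)^2 - 10*m + 9 := by nlinarith [sq_nonneg ((m:ℝ) - 1)]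
  set s : ℝ := Real.sqrt (5*(m:ℝ)^2 - 10*m + 9) with hsdef
  have hts : s^2 = 5*(m:ℝ)^2 - 10*m + 9 := Real.sq_sqrt hnn
  set rp : ℝ := (-(4 + (n : ℝ) - 3 * m * n) + n * s) / 2 with hrp
  set rm : ℝ := (-(4 + (n : ℝ) - 3 * m * n) - n * s) / 2 with hrm
  have hsumr : rp + rm = 3*(m:ℝ)*n - n - 4 := by rw [hrp, hrm]; ring
  have hprodr : rp * rm = (m:ℝ)^2*n^2 + (m:ℝ)*n^2 - 2*n^2 - 6*(m:ℝ)*n + 2*n + 4 := by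
    have h1 : rp * rm = ((3*(m:ℝ)*n - n - 4)^2 - ((n:ℝ)*s)^2)/4 := by rw [hrp, hrm]; ring
    rw [h1, mul_pow, hts]; ring
  have hCsum : ψ rp + ψ rm = 3*(m:RatFunc ℝ)*(n:RatFunc ℝ) - n - 4 := by
    rw [← _root_.map_add, hsumr]
    simp only [_root_.map_sub, _root_.map_mul, _root_.map_natCast, _root_.map_ofNat]
  have hCprod : ψ rp * ψ rm
      = (m:RatFunc ℝ)^2*(n:RatFunc ℝ)^2 + (m:RatFunc ℝ)*(n:RatFunc ℝ)^2 - 2*(n:RatFunc ℝ)^2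
        - 6*(m:RatFunc ℝ)*(n:RatFunc ℝ) + 2*(n:RatFunc ℝ) + 4 := by
    rw [← _root_.map_mul, hprodr]
    simp only [_root_.map_add, _root_.map_sub, _root_.map_mul, _root_.map_pow, _root_.map_natCast, _root_.map_ofNat]
  have hquad : (φ X - ψ rp) * (φ X - ψ rm)
      = a^2 - (3*(m:RatFunc ℝ) - 1)*(n:RatFunc ℝ)*a
          + ((m:RatFunc ℝ)-1)*((m:RatFunc ℝ)+2)*(n:RatFunc ℝ)^2 := by
    have hexp : (φ X - ψ rp) * (φ X - ψ rm)
        = (φ X)^2 - (ψ rp + ψ rm) * φ X + ψ rp * ψ rm := by ring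
    rw [hexp, hCsum, hCprod, hx]; ring
  -- the charmatrix image
  have hcm : φ D.charpoly = ((charmatrix D).map φ).det := by
    rw [show D.charpoly = (charmatrix D).det from rfl]
    exact RingHom.map_det φ (charmatrix D)
  have hmap : (charmatrix D).map φ
      = Matrix.of (fun u v : Σ j, Fin (sizes j) =>
          (if u = v then a else 0) - (if u.1 = v.1 then (1:RatFunc ℝ) else 0) - 1) := by
    ext u v
    rw [Matrix.map_apply]
    by_cases h : u = v
    · subst h
      rw [Matrix.charmatrix_apply_eq]
      have hDu : D u u = 0 := by
        simp [hD, distMatrix, SimpleGraph.dist_self]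
      rw [hDu, Polynomial.C_0, sub_zero]
      simp
      ring
    · rw [Matrix.charmatrix_apply_ne _ _ _ h]
      by_cases h2 : u.1 = v.1
      · have hDu : D u v = 2 := by
          simp only [hD, distMatrix, Matrix.of_apply]
          rw [dist_cmg sizes hs hm1 u v, if_neg h, if_pos h2]
          norm_num
        rw [hDu, _root_.map_neg, hC2]
        simp only [Matrix.of_apply, if_neg h, if_pos h2]
        ring
      · have hDu : D u v = 1 := by
          simp only [hD, distMatrix, Matrix.of_apply]
          rw [dist_cmg sizes hs hm1 u v, if_neg h, if_neg h2]
          norm_num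
        rw [hDu, _root_.map_neg, Polynomial.C_1, _root_.map_one]
        simp only [Matrix.of_apply, if_neg h, if_neg h2]
        ring
  -- part sizes
  have hs0 : sizes 0 = (m-1)*n := by simp [hsizes]
  have hssucc : ∀ i : Fin m, sizes i.succ = n := by
    intro i; simp [hsizes, Fin.succ_ne_zero i]
  have hprod : (∏ i, a ^ (sizes i - 1) * (a - (sizes i : RatFunc ℝ)))
      = (a ^ ((m-1)*n - 1) * (a - (((m-1)*n : ℕ) : RatFunc ℝ)))
        * (a ^ (n - 1) * (a - (n : RatFunc ℝ))) ^ m := by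
    rw [Fin.prod_univ_succ, hs0]
    congr 1
    have key : ∀ i : Fin m, a ^ (sizes i.succ - 1) * (a - (sizes i.succ : RatFunc ℝ))
        = a ^ (n-1) * (a - (n : RatFunc ℝ)) := fun i => by rw [hssucc i]
    rw [Finset.prod_congr rfl fun i _ => key i, Finset.prod_const, Finset.card_univ,
      Fintype.card_fin]
  have hsum2 : (∑ i, ((sizes i : ℕ) : RatFunc ℝ) * (a - (sizes i : RatFunc ℝ))⁻¹)
      = (((m-1)*n : ℕ) : RatFunc ℝ) * (a - (((m-1)*n:ℕ) : RatFunc ℝ))⁻¹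
        + m * ((n : RatFunc ℝ) * (a - (n : RatFunc ℝ))⁻¹) := by
    rw [Fin.sum_univ_succ, hs0]
    congr 1
    have key : ∀ i : Fin m, ((sizes i.succ : ℕ) : RatFunc ℝ) * (a - (sizes i.succ : RatFunc ℝ))⁻¹
        = (n:RatFunc ℝ)*(a-(n:RatFunc ℝ))⁻¹ := fun i => by rw [hssucc i]
    rw [Finset.sum_congr rfl fun i _ => key i, Finset.sum_const, Finset.card_univ,
      Fintype.card_fin, nsmul_eq_mul]
  have h0 : a - (((m-1)*n : ℕ) : RatFunc ℝ) ≠ 0 := by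
    have := hai 0; rwa [hs0] at this
  have hN : a - ((n:ℕ) : RatFunc ℝ) ≠ 0 := by
    have := hai ((⟨0, by omega⟩ : Fin m).succ); rwa [hssucc ⟨0, by omega⟩] at this
  -- rhs maps
  have hφ2 : φ ((X:Polynomial ℝ) + 2) = a := by rw [_root_.map_add, _root_.map_ofNat, haa]
  have hφn2 : φ ((X:Polynomial ℝ) - C ((n:ℝ) - 2)) = a - (n : RatFunc ℝ) := by
    rw [_root_.map_sub, show C ((n:ℝ) - 2) = C ((n:ℕ):ℝ) - C (2:ℝ) from _root_.map_sub C _ _, _root_.map_sub,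
      hC2, hCn n, hx]
    ring
  have main : φ D.charpoly
      = φ ((X + 2) ^ (2 * m * n - (m + n) - 1) * (X - C ((n : ℝ) - 2)) ^ (m - 1) *
        (X - C rp) * (X - C rm)) := by
    rw [hcm, hmap, det_E sizes hs a ha hai, hprod, hsum2,
      key_alg m n hm hn a ha h0 hN,
      _root_.map_mul, _root_.map_mul, _root_.map_mul, _root_.map_pow, _root_.map_pow, hφ2, hφn2, _root_.map_sub, _root_.map_sub, hψa, hψa,
      mul_assoc _ (φ X - ψ rp) (φ X - ψ rm), hquad]
  exact main
end

section
/- For $m > 2$ odd, the distance Laplacian spectrum of $K_{(m-1)n, n, \ldots, n}$ (with $m$ parts of size $n$; the non-commuting graph of $M_{2mn}$) consists of $0$ with multiplicity $1$, $n(2m-1)$ with multiplicity $m$, $2mn$ with multiplicity $m(n-1)$, and $(3m-2)n$ with multiplicity $(m-1)n - 1$. In particular, this graph is distance Laplacian integral for all $m$ and $n$. -/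
open Polynomial

/-- The distance Laplacian matrix `Tr(G) - D(G)`. -/
noncomputable def distLapMatrix {V : Type*} [Fintype V] [DecidableEq V] (G : SimpleGraph V) :
    Matrix V V ℝ :=
  Matrix.diagonal (fun v => ∑ u, (G.dist v u : ℝ)) - distMatrix G

open Matrix

lemma cmg_dist {k : ℕ} (hk : 1 < k) (σ : Fin k → ℕ) (hσ : ∀ i, 0 < σ i)
    (u v : Σ i, Fin (σ i)) :
    (SimpleGraph.completeMultipartiteGraph (fun i => Fin (σ i))).dist u v =
      if u = v then 0 else if u.1 = v.1 then 2 else 1 := by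
  set G := SimpleGraph.completeMultipartiteGraph (fun i => Fin (σ i)) with hG
  have hadj : ∀ a b : Σ i, Fin (σ i), G.Adj a b ↔ a.1 ≠ b.1 := by
    intro a b; rfl
  by_cases huv : u = v
  · simp [huv]
  · by_cases hfst : u.1 = v.1
    · simp only [huv, hfst, if_neg, if_true, if_false]
      -- distance is 2
      obtain ⟨j, hj⟩ : ∃ j : Fin k, j ≠ u.1 := by
        haveI : Nontrivial (Fin k) := Fin.nontrivial_iff_two_le.mpr hk
        exact exists_ne u.1
      set w : Σ i, Fin (σ i) := ⟨j, ⟨0, hσ j⟩⟩ with hw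
      have h1 : G.Adj u w := by rw [hadj]; exact fun h => hj (h.symm)
      have h2 : G.Adj w v := by rw [hadj]; simpa [hw, hfst] using fun h => hj h
      have hle : G.dist u v ≤ 2 := by
        have := SimpleGraph.dist_le (SimpleGraph.Walk.cons h1 (SimpleGraph.Walk.cons h2 SimpleGraph.Walk.nil))
        simpa using this
      have hne0 : G.dist u v ≠ 0 := by
        rw [SimpleGraph.dist_ne_zero_iff_ne_and_reachable]
        exact ⟨huv, (h1.toWalk.append h2.toWalk).reachable⟩
      have hne1 : G.dist u v ≠ 1 := by
        intro h
        rw [SimpleGraph.dist_eq_one_iff_adj, hadj] at h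
        exact h hfst
      omega
    · simp only [huv, hfst, if_false, if_neg]
      rw [SimpleGraph.dist_eq_one_iff_adj, hadj]
      exact hfst

lemma det_blockDiagonal'_fin {R : Type*} [CommRing R] {k : ℕ} {σ : Fin k → ℕ}
    (B : ∀ i, Matrix (Fin (σ i)) (Fin (σ i)) R) :
    (Matrix.blockDiagonal' B).det = ∏ i, (B i).det := by
  have hbt : Matrix.BlockTriangular (Matrix.blockDiagonal' B) Sigma.fst := by
    intro u v h
    exact Matrix.blockDiagonal'_apply_ne B _ _ (ne_of_gt h)
  rw [hbt.det_fintype]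
  refine Finset.prod_congr rfl fun i _ => ?_
  -- equiv between Fin (σ i) and the subtype
  let e : Fin (σ i) ≃ {u : Σ j, Fin (σ j) // u.1 = i} :=
    { toFun := fun a => ⟨⟨i, a⟩, rfl⟩
      invFun := fun u => Fin.cast (by rw [u.2]) u.1.2
      left_inv := fun a => rfl
      right_inv := fun u => by
        rcases u with ⟨⟨j, a⟩, h⟩
        subst h
        rfl }
  rw [← Matrix.det_submatrix_equiv_self e]
  congr 1
  ext a b
  simp only [Matrix.submatrix_apply, Matrix.toSquareBlock_def, e, Equiv.coe_fn_mk]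
  exact Matrix.blockDiagonal'_apply_eq B i a b

lemma det_smul_one_add_allOnes {K : Type*} [Field K] {s : ℕ} (hs : 0 < s) (c : K) (hc : c ≠ 0) :
    (c • (1 : Matrix (Fin s) (Fin s) K) + Matrix.of fun _ _ => (1 : K)).det
      = c ^ (s - 1) * (c + s) := by
  have hJ : (Matrix.of fun _ _ => (1 : K) : Matrix (Fin s) (Fin s) K)
      = Matrix.replicateCol Unit (fun _ : Fin s => (1:K)) * Matrix.replicateRow Unit (fun _ : Fin s => (1:K)) := by
    ext a b
    simp [Matrix.mul_apply]
  have key : c • (1 : Matrix (Fin s) (Fin s) K) + Matrix.of (fun _ _ => (1 : K))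
      = c • ((1 : Matrix (Fin s) (Fin s) K)
          + Matrix.replicateCol Unit (fun _ : Fin s => c⁻¹) * Matrix.replicateRow Unit (fun _ : Fin s => (1:K))) := by
    rw [smul_add]
    congr 1
    ext a b
    simp [Matrix.mul_apply, hc]
  rw [key, Matrix.det_smul, Matrix.det_one_add_replicateCol_mul_replicateRow]
  have hdot : (fun _ : Fin s => (1:K)) ⬝ᵥ (fun _ => c⁻¹) = s * c⁻¹ := by
    simp [dotProduct]
  rw [hdot]
  have hcs : c ^ s = c ^ (s - 1) * c := by
    conv_lhs => rw [← Nat.sub_add_cancel hs]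
    rw [pow_succ]
  rw [Fintype.card_fin, hcs]
  field_simp

lemma main_det {K : Type*} [Field K] {k : ℕ} {σ : Fin k → ℕ} (hσ : ∀ i, 0 < σ i)
    (r : Fin k → K) (a : K) (ha : a ≠ 0) (hr : ∀ i, r i ≠ 0)
    (hra : ∀ i, r i + σ i = a) :
    (Matrix.blockDiagonal'
        (fun i => r i • (1 : Matrix (Fin (σ i)) (Fin (σ i)) K) + Matrix.of fun _ _ => (1 : K))
      + Matrix.of fun _ _ => (1 : K)).det
    = a ^ k * (1 + (∑ i, (σ i : K)) * a⁻¹) * ∏ i, r i ^ (σ i - 1) := by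
  set V := Σ i, Fin (σ i)
  set B := fun i => r i • (1 : Matrix (Fin (σ i)) (Fin (σ i)) K) + Matrix.of fun _ _ => (1 : K)
    with hB
  set BD := Matrix.blockDiagonal' B with hBD
  -- row sums of BD are all `a`
  have hrow : ∀ u : V, ∑ w : V, BD u w = a := by
    rintro ⟨i, p⟩
    rw [← Finset.univ_sigma_univ, Finset.sum_sigma]
    rw [Finset.sum_eq_single i]
    · have : ∀ q : Fin (σ i), BD ⟨i, p⟩ ⟨i, q⟩ = B i p q := fun q =>
        Matrix.blockDiagonal'_apply_eq B i p q
      simp only [this, hB, Matrix.add_apply, Matrix.smul_apply, Matrix.one_apply,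
        Matrix.of_apply, smul_eq_mul]
      rw [Finset.sum_add_distrib]
      simp only [mul_ite, mul_one, mul_zero]
      rw [Finset.sum_ite_eq Finset.univ p fun _ => r i]
      simp [← hra i]
    · intro j _ hj
      have : ∀ q : Fin (σ j), BD ⟨i, p⟩ ⟨j, q⟩ = 0 := fun q =>
        Matrix.blockDiagonal'_apply_ne B p q (Ne.symm hj)
      simp [this]
    · simp
  -- key factorization
  have key : BD * ((1 : Matrix V V K) + a⁻¹ • (Matrix.of fun _ _ => (1 : K)))
      = BD + Matrix.of fun _ _ => (1 : K) := by
    rw [Matrix.mul_add, Matrix.mul_one]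
    congr 1
    ext u v
    simp only [Matrix.mul_apply, Matrix.smul_apply, Matrix.of_apply, smul_eq_mul]
    simp only [mul_one]
    rw [← Finset.sum_mul]
    rw [hrow u, mul_inv_cancel₀ ha]
  have hJ : (Matrix.of fun _ _ => (1 : K) : Matrix V V K)
      = Matrix.replicateCol Unit (fun _ : V => (1:K)) * Matrix.replicateRow Unit (fun _ : V => (1:K)) := by
    ext u v
    simp [Matrix.mul_apply]
  have hdet2 : ((1 : Matrix V V K) + a⁻¹ • (Matrix.of fun _ _ => (1 : K))).det
      = 1 + (∑ i, (σ i : K)) * a⁻¹ := by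
    have : (1 : Matrix V V K) + a⁻¹ • (Matrix.of fun _ _ => (1 : K))
        = 1 + Matrix.replicateCol Unit (fun _ : V => a⁻¹) * Matrix.replicateRow Unit (fun _ : V => (1:K)) := by
      congr 1
      ext u v
      simp [Matrix.mul_apply]
    rw [this, Matrix.det_one_add_replicateCol_mul_replicateRow]
    congr 1
    simp only [dotProduct, one_mul, mul_one, Finset.sum_const, Finset.card_univ,
      nsmul_eq_mul]
    congr 1
    rw [Fintype.card_sigma]
    push_cast
    simp
  calc (BD + Matrix.of fun _ _ => (1 : K)).det
      = (BD * ((1 : Matrix V V K) + a⁻¹ • (Matrix.of fun _ _ => (1 : K)))).det := by rw [key]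
    _ = BD.det * (1 + (∑ i, (σ i : K)) * a⁻¹) := by rw [Matrix.det_mul, hdet2]
    _ = (∏ i, (r i ^ (σ i - 1) * (r i + σ i))) * (1 + (∑ i, (σ i : K)) * a⁻¹) := by
        rw [hBD, det_blockDiagonal'_fin]
        congr 1
        exact Finset.prod_congr rfl fun i _ => det_smul_one_add_allOnes (hσ i) (r i) (hr i)
    _ = a ^ k * (1 + (∑ i, (σ i : K)) * a⁻¹) * ∏ i, r i ^ (σ i - 1) := by
        simp only [hra]
        rw [Finset.prod_mul_distrib, Finset.prod_const, Finset.card_univ, Fintype.card_fin]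
        ring

lemma cmg_rowsum {k : ℕ} (hk : 1 < k) (σ : Fin k → ℕ) (hσ : ∀ i, 0 < σ i)
    (u : Σ i, Fin (σ i)) :
    ∑ w : Σ i, Fin (σ i),
        ((SimpleGraph.completeMultipartiteGraph (fun i => Fin (σ i))).dist u w : ℝ)
      = (∑ j, (σ j : ℝ)) + σ u.1 - 2 := by
  have hterm : ∀ w : Σ i, Fin (σ i),
      ((SimpleGraph.completeMultipartiteGraph (fun i => Fin (σ i))).dist u w : ℝ)
        = ((1 : ℝ) + (if u.1 = w.1 then 1 else 0)) + (if u = w then -2 else 0) := by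
    intro w
    rw [cmg_dist hk σ hσ]
    by_cases h1 : u = w
    · simp [h1]; norm_num
    · by_cases h2 : u.1 = w.1 <;> simp [h1, h2] <;> norm_num
  rw [Finset.sum_congr rfl fun w _ => hterm w]
  rw [Finset.sum_add_distrib, Finset.sum_add_distrib]
  have e1 : ∑ _w : Σ i, Fin (σ i), (1 : ℝ) = ∑ j, (σ j : ℝ) := by
    rw [Finset.sum_const, Finset.card_univ, Fintype.card_sigma]
    push_cast
    simp
  have e2 : ∑ w : Σ i, Fin (σ i), (if u.1 = w.1 then (1:ℝ) else 0) = σ u.1 := by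
    rw [← Finset.univ_sigma_univ, Finset.sum_sigma]
    have : ∀ j : Fin k, ∑ _q : Fin (σ j), (if u.1 = j then (1:ℝ) else 0)
        = if u.1 = j then (σ j : ℝ) else 0 := by
      intro j
      by_cases h : u.1 = j <;> simp [h, Finset.sum_const]
    rw [Finset.sum_congr rfl fun j _ => this j]
    rw [Finset.sum_ite_eq Finset.univ u.1 fun j => (σ j : ℝ)]
    simp
  have e3 : ∑ w : Σ i, Fin (σ i), (if u = w then (-2:ℝ) else 0) = -2 := by
    rw [Finset.sum_ite_eq Finset.univ u fun _ => (-2:ℝ)]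
    simp
  rw [e1, e2, e3]
  ring

lemma charmatrix_map_eq {k : ℕ} (hk : 1 < k) (σ : Fin k → ℕ) (hσ : ∀ i, 0 < σ i)
    {K : Type*} [Field K] (φ : Polynomial ℝ →+* K) :
    (Matrix.charmatrix (distLapMatrix (SimpleGraph.completeMultipartiteGraph
        fun i => Fin (σ i)))).map φ
      = Matrix.blockDiagonal'
          (fun i => (φ (X - C ((∑ j, (σ j : ℝ)) + σ i))) •
              (1 : Matrix (Fin (σ i)) (Fin (σ i)) K) + Matrix.of fun _ _ => (1 : K))
        + Matrix.of fun _ _ => (1 : K) := by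
  set G := SimpleGraph.completeMultipartiteGraph (fun i => Fin (σ i)) with hG
  set L := distLapMatrix G with hL
  ext u v
  rcases u with ⟨i, p⟩
  rcases v with ⟨j, q⟩
  simp only [Matrix.map_apply, Matrix.add_apply, Matrix.of_apply]
  by_cases hij : i = j
  · subst hij
    rw [Matrix.blockDiagonal'_apply_eq]
    simp only [Matrix.add_apply, Matrix.smul_apply, Matrix.one_apply, Matrix.of_apply,
      smul_eq_mul]
    by_cases hpq : p = q
    · subst hpq
      have huv : (⟨i, p⟩ : Σ i, Fin (σ i)) = ⟨i, p⟩ := rfl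
      rw [Matrix.charmatrix_apply_eq]
      have hLdiag : L ⟨i, p⟩ ⟨i, p⟩ = (∑ j, (σ j : ℝ)) + σ i - 2 := by
        rw [hL, distLapMatrix]
        simp only [Matrix.sub_apply, Matrix.diagonal_apply_eq, distMatrix, Matrix.of_apply]
        rw [cmg_rowsum hk σ hσ, SimpleGraph.dist_self]
        simp
      rw [hLdiag]
      simp only [if_pos rfl, mul_one]
      push_cast
      simp only [map_sub, map_ofNat]
      ring
    · have hne : (⟨i, p⟩ : Σ i, Fin (σ i)) ≠ ⟨i, q⟩ := by
        simp [hpq]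
      rw [Matrix.charmatrix_apply_ne _ _ _ hne]
      have hLval : L ⟨i, p⟩ ⟨i, q⟩ = -2 := by
        rw [hL, distLapMatrix]
        simp only [Matrix.sub_apply, Matrix.diagonal_apply_ne _ hne, distMatrix, Matrix.of_apply]
        rw [cmg_dist hk σ hσ]
        simp [hne]
      rw [hLval]
      simp only [if_neg hpq, mul_zero, zero_add]
      push_cast
      simp only [map_neg, map_ofNat, neg_neg]
      norm_num
  · rw [Matrix.blockDiagonal'_apply_ne _ _ _ hij]
    have hne : (⟨i, p⟩ : Σ i, Fin (σ i)) ≠ ⟨j, q⟩ := by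
      intro h
      exact hij (congrArg Sigma.fst h)
    rw [Matrix.charmatrix_apply_ne _ _ _ hne]
    have hLval : L ⟨i, p⟩ ⟨j, q⟩ = -1 := by
      rw [hL, distLapMatrix]
      simp only [Matrix.sub_apply, Matrix.diagonal_apply_ne _ hne, distMatrix, Matrix.of_apply]
      rw [cmg_dist hk σ hσ]
      simp [hne, hij]
    rw [hLval]
    simp

lemma charpoly_eq {k : ℕ} (hk : 1 < k) (σ : Fin k → ℕ) (hσ : ∀ i, 0 < σ i) :
    (distLapMatrix (SimpleGraph.completeMultipartiteGraph
        fun i => Fin (σ i))).charpoly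
      = X * (X - C ((∑ j, σ j : ℕ) : ℝ)) ^ (k - 1) *
          ∏ i, (X - C (((∑ j, (σ j : ℕ)) + σ i : ℕ) : ℝ)) ^ (σ i - 1) := by
  classical
  set K := FractionRing (Polynomial ℝ)
  set φ : Polynomial ℝ →+* K := algebraMap (Polynomial ℝ) K with hφ
  have hinj : Function.Injective φ := IsFractionRing.injective (Polynomial ℝ) K
  apply hinj
  set Sn : ℕ := ∑ j, σ j with hSn
  have hScast : (∑ j, (σ j : ℝ)) = (Sn : ℝ) := by push_cast [hSn]; rfl
  set r : Fin k → K := fun i => φ (X - C ((Sn + σ i : ℕ) : ℝ)) with hr'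
  set a : K := φ (X - C ((Sn : ℕ) : ℝ)) with ha'
  have hφinj : ∀ p : Polynomial ℝ, p ≠ 0 → φ p ≠ 0 := by
    intro p hp h
    exact hp (hinj (by simpa using h))
  have ha : a ≠ 0 := hφinj _ (X_sub_C_ne_zero _)
  have hrne : ∀ i, r i ≠ 0 := fun i => hφinj _ (X_sub_C_ne_zero _)
  have hra : ∀ i, r i + σ i = a := by
    intro i
    rw [hr', ha']
    push_cast
    simp only [map_sub, C_add, map_add, Polynomial.C_eq_natCast, map_natCast]
    ring
  -- compute φ of charpoly as a determinant over K
  have step1 : φ ((distLapMatrix (SimpleGraph.completeMultipartiteGraph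
      fun i => Fin (σ i))).charpoly)
      = (Matrix.blockDiagonal'
          (fun i => r i • (1 : Matrix (Fin (σ i)) (Fin (σ i)) K) + Matrix.of fun _ _ => (1 : K))
        + Matrix.of fun _ _ => (1 : K)).det := by
    rw [Matrix.charpoly, RingHom.map_det]
    congr 1
    have := charmatrix_map_eq hk σ hσ φ
    rw [RingHom.mapMatrix_apply, this]
    congr 1
    funext i
    rw [hr']
    congr 2
    rw [hScast]
    push_cast
    ring
  have step2 := main_det hσ r a ha hrne hra
  rw [step1, step2]
  -- now convert a^k * (1 + S a⁻¹) to φ X * a^(k-1)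
  have hSK : (∑ i, (σ i : K)) = (Sn : K) := by rw [hSn]; exact (Nat.cast_sum _ _).symm
  have hane : a + (Sn : K) = φ X := by
    rw [ha', map_sub, Polynomial.C_eq_natCast, map_natCast]
    ring
  have hak : a ^ k * (1 + (Sn : K) * a⁻¹) = φ X * a ^ (k - 1) := by
    have hk1 : a ^ k = a ^ (k - 1) * a := by
      conv_lhs => rw [show k = (k-1)+1 by omega, pow_succ]
    rw [hk1, ← hane]
    have hinv : a * a⁻¹ = 1 := mul_inv_cancel₀ ha
    linear_combination (a ^ (k - 1) * (Sn : K)) * hinv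
  rw [hSK, hak]
  rw [_root_.map_mul, _root_.map_mul, map_pow, map_prod]
  simp only [map_pow]
  rfl

/-- For `m > 2` odd, the distance Laplacian spectrum of `K_{(m-1)n,n,…,n}` (with `m` parts
of size `n`; the non-commuting graph of `M_{2mn}`) consists of `0` with multiplicity `1`,
`n(2m-1)` with multiplicity `m`, `2mn` with multiplicity `m(n-1)`, and `(3m-2)n` with
multiplicity `(m-1)n-1`; in particular this graph is distance Laplacian integral. -/
theorem distLaplacian_spectrum_metacyclic_odd (m n : ℕ) (hm : 2 < m) (hodd : Odd m)
    (hn : 1 ≤ n) :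
    (distLapMatrix (SimpleGraph.completeMultipartiteGraph
        fun i : Fin (m + 1) => Fin (if i = 0 then (m - 1) * n else n))).charpoly =
      X * (X - C ((n : ℝ) * (2 * m - 1))) ^ m * (X - C (2 * (m : ℝ) * n)) ^ (m * (n - 1)) *
        (X - C ((3 * (m : ℝ) - 2) * n)) ^ ((m - 1) * n - 1) ∧
    ∀ μ ∈ (distLapMatrix (SimpleGraph.completeMultipartiteGraph
        fun i : Fin (m + 1) => Fin (if i = 0 then (m - 1) * n else n))).charpoly.roots,
      ∃ z : ℤ, μ = (z : ℝ) := by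
  classical
  set σ : Fin (m + 1) → ℕ := fun i => if i = 0 then (m - 1) * n else n with hσdef
  have hσ : ∀ i, 0 < σ i := by
    intro i
    by_cases h : i = 0
    · simp only [hσdef, h, if_pos rfl]
      exact Nat.mul_pos (by omega) (by omega)
    · simp only [hσdef, if_neg h]
      omega
  have hk : 1 < m + 1 := by omega
  have hSn : (∑ j, σ j) = (2 * m - 1) * n := by
    rw [Fin.sum_univ_succ]
    have h0 : σ 0 = (m - 1) * n := by simp [hσdef]
    have hs : ∀ i : Fin m, σ i.succ = n := fun i => by
      simp [hσdef, Fin.succ_ne_zero i]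
    rw [h0, Finset.sum_congr rfl fun i _ => hs i, Finset.sum_const, Finset.card_univ,
      Fintype.card_fin, smul_eq_mul]
    have e1 : (m - 1) * n = m * n - n := by rw [Nat.sub_mul, one_mul]
    have e2 : (2 * m - 1) * n = 2 * (m * n) - n := by
      rw [Nat.sub_mul, one_mul, mul_assoc]
    have hmn : n ≤ m * n := Nat.le_mul_of_pos_left n (by omega)
    omega
  have key := charpoly_eq hk σ hσ
  rw [hSn] at key
  -- split the product
  have hprod : (∏ i, (X - C ((((2 * m - 1) * n) + σ i : ℕ) : ℝ)) ^ (σ i - 1))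
      = (X - C ((3 * (m : ℝ) - 2) * n)) ^ ((m - 1) * n - 1) *
        (X - C (2 * (m : ℝ) * n)) ^ (m * (n - 1)) := by
    rw [Fin.prod_univ_succ]
    have h0 : σ 0 = (m - 1) * n := by simp [hσdef]
    have hs : ∀ i : Fin m, σ i.succ = n := fun i => by
      simp [hσdef, Fin.succ_ne_zero i]
    have c1 : ((((2 * m - 1) * n) + (m - 1) * n : ℕ) : ℝ) = (3 * (m : ℝ) - 2) * n := by
      push_cast [Nat.cast_sub (by omega : 1 ≤ 2 * m), Nat.cast_sub (by omega : 1 ≤ m)]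
      ring
    have c2 : ((((2 * m - 1) * n) + n : ℕ) : ℝ) = 2 * (m : ℝ) * n := by
      push_cast [Nat.cast_sub (by omega : 1 ≤ 2 * m)]
      ring
    rw [h0, c1]
    congr 1
    rw [Finset.prod_congr rfl fun i (_ : i ∈ Finset.univ) => by rw [hs i, c2]]
    rw [Finset.prod_const, Finset.card_univ, Fintype.card_fin, ← pow_mul, Nat.mul_comm (n-1) m]
  have c0 : (((2 * m - 1) * n : ℕ) : ℝ) = (n : ℝ) * (2 * m - 1) := by
    push_cast [Nat.cast_sub (by omega : 1 ≤ 2 * m)]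
    ring
  have hmain : (distLapMatrix (SimpleGraph.completeMultipartiteGraph
        fun i : Fin (m + 1) => Fin (σ i))).charpoly =
      X * (X - C ((n : ℝ) * (2 * m - 1))) ^ m * (X - C (2 * (m : ℝ) * n)) ^ (m * (n - 1)) *
        (X - C ((3 * (m : ℝ) - 2) * n)) ^ ((m - 1) * n - 1) := by
    rw [key, hprod, c0]
    simp only [Nat.add_sub_cancel]
    ring
  refine ⟨hmain, ?_⟩
  intro μ hμ
  rw [hmain] at hμ
  have hP : (X * (X - C ((n : ℝ) * (2 * m - 1))) ^ m * (X - C (2 * (m : ℝ) * n)) ^ (m * (n - 1)) *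
      (X - C ((3 * (m : ℝ) - 2) * n)) ^ ((m - 1) * n - 1)).Monic :=
    ((monic_X.mul ((monic_X_sub_C _).pow m)).mul ((monic_X_sub_C _).pow _)).mul
      ((monic_X_sub_C _).pow _)
  rw [mem_roots hP.ne_zero] at hμ
  have := hμ
  simp only [IsRoot, eval_mul, eval_pow, eval_sub, eval_X, eval_C] at this
  rcases mul_eq_zero.mp this with h | h
  · rcases mul_eq_zero.mp h with h | h
    · rcases mul_eq_zero.mp h with h | h
      · exact ⟨0, by simpa using h⟩
      · have : μ = (n : ℝ) * (2 * m - 1) := by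
          have := (pow_eq_zero_iff' ).mp h
          linarith [this.1]
        exact ⟨n * (2 * m - 1), by rw [this]; push_cast [Int.natCast_sub]; ring⟩
    · have : μ = 2 * (m : ℝ) * n := by
        have := (pow_eq_zero_iff').mp h
        linarith [this.1]
      exact ⟨2 * m * n, by rw [this]; push_cast; ring⟩
  · have : μ = (3 * (m : ℝ) - 2) * n := by
      have := (pow_eq_zero_iff').mp h
      linarith [this.1]
    exact ⟨(3 * m - 2) * n, by rw [this]; push_cast; ring⟩
end

section
/- For $n \geq 1$, the distance signless Laplacian spectrum of $K_{2n,2n,2n}$ (the non-commuting graph of the metacyclic group $M_{8n}$) consists of $8n-4$ with multiplicity $3(2n-1)$, $10n-4$ with multiplicity $2$, and $16n-4$ with multiplicity $1$. In particular, this graph is distance signless Laplacian integral for all $n$. -/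
open Polynomial

/-- The distance signless Laplacian matrix `Tr(G) + D(G)`. -/
noncomputable def distSignlessLapMatrix {V : Type*} [Fintype V] [DecidableEq V]
    (G : SimpleGraph V) : Matrix V V ℝ :=
  Matrix.diagonal (fun v => ∑ u, (G.dist v u : ℝ)) + distMatrix G

lemma charpoly_similar {m R : Type*} [Fintype m] [DecidableEq m] [CommRing R]
    (A B P Q : Matrix m m R) (hPQ : P * Q = 1) (hAP : A * P = P * B) :
    A.charpoly = B.charpoly := by
  have hA : A = P * B * Q := by
    calc A = A * (P * Q) := by rw [hPQ, Matrix.mul_one]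
    _ = (A * P) * Q := by rw [Matrix.mul_assoc]
    _ = P * B * Q := by rw [hAP]
  have hPQ' : (C : R →+* R[X]).mapMatrix P * (C : R →+* R[X]).mapMatrix Q = 1 := by
    rw [← map_mul, hPQ, map_one]
  have key : Matrix.charmatrix A =
      (C : R →+* R[X]).mapMatrix P * Matrix.charmatrix B * (C : R →+* R[X]).mapMatrix Q := by
    rw [hA, Matrix.charmatrix, Matrix.charmatrix, map_mul, map_mul,
      Matrix.mul_sub, Matrix.sub_mul]
    congr 1
    rw [← (Matrix.scalar_commute (X : R[X]) (fun r => Commute.all _ _) _).eq,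
      Matrix.mul_assoc, hPQ', Matrix.mul_one]
  have hQP' : ((C : R →+* R[X]).mapMatrix Q).det * ((C : R →+* R[X]).mapMatrix P).det = 1 := by
    rw [← Matrix.det_mul, ← map_mul, mul_eq_one_comm.mp hPQ, map_one, Matrix.det_one]
  rw [Matrix.charpoly, Matrix.charpoly, key, Matrix.det_mul, Matrix.det_mul]
  calc ((C : R →+* R[X]).mapMatrix P).det * (Matrix.charmatrix B).det *
        ((C : R →+* R[X]).mapMatrix Q).det
      = (Matrix.charmatrix B).det * (((C : R →+* R[X]).mapMatrix Q).det *
        ((C : R →+* R[X]).mapMatrix P).det) := by ring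
    _ = (Matrix.charmatrix B).det := by rw [hQP', mul_one]

lemma charpoly_diagonal {m R : Type*} [Fintype m] [DecidableEq m] [CommRing R] (d : m → R) :
    (Matrix.diagonal d).charpoly = ∏ i, (X - C (d i)) := by
  have h : Matrix.charmatrix (Matrix.diagonal d) =
      Matrix.diagonal (fun i => X - C (d i)) := by
    ext i j
    by_cases h : i = j
    · subst h; simp [Matrix.charmatrix_apply]
    · simp [Matrix.charmatrix_apply, Matrix.diagonal_apply_ne _ h]
  rw [Matrix.charpoly, h, Matrix.det_diagonal]

namespace M8nAux

abbrev VV (n : ℕ) := (_ : Fin 3) × Fin (2 * n)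

abbrev MG (n : ℕ) : SimpleGraph (VV n) :=
  SimpleGraph.completeMultipartiteGraph fun _ : Fin 3 => Fin (2 * n)

variable (n : ℕ)

lemma MG_adj {u v : VV n} : (MG n).Adj u v ↔ u.1 ≠ v.1 := by
  simp [MG]

lemma MG_dist (hn : 1 ≤ n) (u v : VV n) :
    (MG n).dist u v = if u = v then 0 else if u.1 = v.1 then 2 else 1 := by
  have h2n : 0 < 2 * n := by omega
  by_cases h : u = v
  · simp [h]
  · by_cases h1 : u.1 = v.1
    · simp only [h, h1, if_false, if_true]
      have hw : (MG n).Adj u ⟨u.1 + 1, ⟨0, h2n⟩⟩ := by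
        rw [MG_adj]
        intro hc
        have : (u.1 : Fin 3) + 1 = u.1 := hc.symm
        simpa using this
      have hw2 : (MG n).Adj ⟨u.1 + 1, ⟨0, h2n⟩⟩ v := by
        rw [MG_adj]
        intro hc
        rw [← h1] at hc
        simpa using hc
      have hle : (MG n).dist u v ≤ 2 := by
        have h' := SimpleGraph.dist_le (hw.toWalk.append hw2.toWalk)
        simpa using h'
      have hne1 : (MG n).dist u v ≠ 1 := by
        rw [ne_eq, SimpleGraph.dist_eq_one_iff_adj, MG_adj]
        simpa using h1
      have hne0 : (MG n).dist u v ≠ 0 := by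
        have hr : (MG n).Reachable u v := (hw.toWalk.append hw2.toWalk).reachable
        rw [ne_eq, hr.dist_eq_zero_iff]
        exact h
      omega
    · simp only [h, h1, if_false]
      rw [SimpleGraph.dist_eq_one_iff_adj, MG_adj]
      exact h1

lemma sum_VV (f : VV n → ℝ) : ∑ s, f s = ∑ a : Fin 3, ∑ b : Fin (2*n), f ⟨a,b⟩ := by
  rw [← Finset.univ_sigma_univ, Finset.sum_sigma]

lemma sum_fstpart (k : Fin 3) :
    ∑ s : VV n, (if s.1 = k then (1:ℝ) else 0) = 2*n := by
  rw [sum_VV]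
  calc ∑ a : Fin 3, ∑ _b : Fin (2*n), (if a = k then (1:ℝ) else 0)
      = ∑ a : Fin 3, (if a = k then (2*n:ℝ) else 0) := by
        refine Finset.sum_congr rfl fun a _ => ?_
        by_cases h : a = k <;> simp [h]
    _ = 2*n := by simp

lemma sum_const_VV : ∑ _s : VV n, (1:ℝ) = 6*n := by
  rw [sum_VV]
  simp; ring

lemma sum_zerocol (hn : 1 ≤ n) (f : VV n → ℝ) (k : Fin 3) :
    ∑ s : VV n, f s * (if s.1 = k ∧ s.2.val = 0 then (1:ℝ) else 0) =
      f ⟨k, ⟨0, by omega⟩⟩ := by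
  have hcond : ∀ s : VV n, (s.1 = k ∧ s.2.val = 0) = (s = ⟨k, ⟨0, by omega⟩⟩) := by
    rintro ⟨a, b⟩
    simp only [eq_iff_iff]
    constructor
    · rintro ⟨rfl, h⟩
      congr 1
      exact Fin.ext h
    · rintro h
      obtain ⟨h1, h2⟩ := Sigma.mk.inj_iff.mp h
      exact ⟨h1, by subst h1; rw [eq_of_heq h2]⟩
  simp only [hcond]
  simp

lemma sum_pick (f : VV n → ℝ) (c : VV n) :
    ∑ s : VV n, f s * (if s = c then (1:ℝ) else 0) = f c := by
  simp

lemma MG_transmission (hn : 1 ≤ n) (v : VV n) :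
    ∑ u, ((MG n).dist v u : ℝ) = 8*n - 2 := by
  have key : ∀ u : VV n, ((MG n).dist v u : ℝ) =
      1 + (if u.1 = v.1 then (1:ℝ) else 0) - 2 * (if v = u then (1:ℝ) else 0) := by
    intro u
    rw [MG_dist n hn]
    by_cases h : v = u
    · subst h; simp; norm_num
    · by_cases h1 : v.1 = u.1 <;> simp [h, h1, eq_comm] <;> norm_num
  simp only [key]
  rw [Finset.sum_sub_distrib, Finset.sum_add_distrib, sum_const_VV, sum_fstpart,
    ← Finset.mul_sum]
  have : ∑ u : VV n, (if v = u then (1:ℝ) else 0) = 1 := by simp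
  rw [this]
  ring

lemma DQ_apply (hn : 1 ≤ n) (r c : VV n) :
    distSignlessLapMatrix (MG n) r c =
      (8*n-4) * (if r = c then 1 else 0) + 1 + (if r.1 = c.1 then 1 else 0) := by
  rw [distSignlessLapMatrix, Matrix.add_apply, distMatrix, Matrix.of_apply,
    MG_dist n hn]
  by_cases h : r = c
  · subst h
    rw [Matrix.diagonal_apply_eq, MG_transmission n hn]
    simp; ring
  · rw [Matrix.diagonal_apply_ne _ h]
    by_cases h1 : r.1 = c.1 <;> simp [h, h1] <;> ring

end M8nAux

namespace M8nAux2
open M8nAux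
variable (n : ℕ)

noncomputable def Tm (n : ℕ) : Matrix (VV n) (VV n) ℝ := fun r c =>
  if c.2.val = 0 then
    (if c.1 = 0 then 1
     else (if r.1 = c.1 then 1 else 0) - (if r.1 = 0 then 1 else 0))
  else (if r = c then 1 else 0) - (if r.1 = c.1 ∧ r.2.val = 0 then 1 else 0)

noncomputable def Sm (n : ℕ) : Matrix (VV n) (VV n) ℝ := fun r c =>
  if r.2.val = 0 then
    (if r.1 = 0 then 1/(6*n)
     else (if c.1 = r.1 then 1 else 0)/(2*n) - 1/(6*n))
  else (if r = c then 1 else 0) - (if c.1 = r.1 then 1 else 0)/(2*n)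

lemma sigma_eq_iff (p i : Fin 3) (q j : Fin (2*n)) :
    (⟨p,q⟩ : VV n) = ⟨i,j⟩ ↔ p = i ∧ q = j := by
  simp [Sigma.mk.inj_iff]

lemma sum_fst_mul (k : Fin 3) (c : ℝ) :
    ∑ s : VV n, (if s.1 = k then (1:ℝ) else 0) * c = 2*n*c := by
  rw [← Finset.sum_mul, sum_fstpart]

lemma sum_const_mul (c : ℝ) : ∑ _s : VV n, c = 6*n*c := by
  calc ∑ _s : VV n, c = ∑ _s : VV n, (1:ℝ) * c := by simp
  _ = 6*n*c := by rw [← Finset.sum_mul, sum_const_VV]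

lemma sum_zerocol_one (hn : 1 ≤ n) (k : Fin 3) :
    ∑ s : VV n, (if s.1 = k ∧ s.2.val = 0 then (1:ℝ) else 0) = 1 := by
  have := sum_zerocol n hn (fun _ => (1:ℝ)) k
  simpa using this

lemma Tm_colsum (hn : 1 ≤ n) (c : VV n) :
    ∑ s, Tm n s c = if c.2.val = 0 ∧ c.1 = 0 then (6*n:ℝ) else 0 := by
  obtain ⟨i, j⟩ := c
  by_cases hj : (j : ℕ) = 0
  · by_cases hi : i = 0
    · have h1 : ∀ s : VV n, Tm n s ⟨i,j⟩ = 1 := fun s => by simp [Tm, hj, hi]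
      rw [Finset.sum_congr rfl fun s _ => h1 s, sum_const_VV, if_pos ⟨hj, hi⟩]
    · have h1 : ∀ s : VV n, Tm n s ⟨i,j⟩ =
          (if s.1 = i then (1:ℝ) else 0) - (if s.1 = 0 then (1:ℝ) else 0) :=
        fun s => by simp [Tm, hj, hi]
      rw [Finset.sum_congr rfl fun s _ => h1 s, Finset.sum_sub_distrib,
        sum_fstpart, sum_fstpart, sub_self, if_neg (by simp [hi])]
  · have h1 : ∀ s : VV n, Tm n s ⟨i,j⟩ =
        (if s = ⟨i,j⟩ then (1:ℝ) else 0) - (if s.1 = i ∧ s.2.val = 0 then (1:ℝ) else 0) :=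
      fun s => by simp [Tm, hj]
    rw [Finset.sum_congr rfl fun s _ => h1 s, Finset.sum_sub_distrib,
      sum_zerocol_one n hn]
    simp [hj]

lemma Tm_partsum (hn : 1 ≤ n) (k : Fin 3) (c : VV n) :
    ∑ s, (if s.1 = k then (1:ℝ) else 0) * Tm n s c =
      if c.2.val = 0 then
        (2*n) * (if c.1 = 0 then 1
          else (if k = c.1 then (1:ℝ) else 0) - (if k = 0 then (1:ℝ) else 0))
      else 0 := by
  obtain ⟨i, j⟩ := c
  by_cases hj : (j : ℕ) = 0
  · have h1 : ∀ s : VV n, (if s.1 = k then (1:ℝ) else 0) * Tm n s ⟨i,j⟩ =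
        (if s.1 = k then (1:ℝ) else 0) *
          (if i = 0 then 1 else (if k = i then (1:ℝ) else 0) - (if k = 0 then (1:ℝ) else 0)) := by
      intro s
      by_cases h : s.1 = k
      · simp [Tm, hj, h]
      · simp [h]
    rw [Finset.sum_congr rfl fun s _ => h1 s, sum_fst_mul, if_pos hj]
  · have h1 : ∀ s : VV n, (if s.1 = k then (1:ℝ) else 0) * Tm n s ⟨i,j⟩ =
        (if i = k then (1:ℝ) else 0) * ((if s = ⟨i,j⟩ then (1:ℝ) else 0)
          - (if s.1 = i ∧ s.2.val = 0 then (1:ℝ) else 0)) := by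
      intro s
      obtain ⟨a, b⟩ := s
      simp only [Tm, hj, if_false, sigma_eq_iff]
      by_cases hak : a = k <;> by_cases hai : a = i <;>
        by_cases hik : i = k <;>
        simp_all [ite_and]
    rw [Finset.sum_congr rfl fun s _ => h1 s, ← Finset.mul_sum,
      Finset.sum_sub_distrib, sum_zerocol_one n hn]
    simp [hj]

end M8nAux2

namespace M8nAux3
open M8nAux M8nAux2
variable (n : ℕ)

lemma Sm_rowpart (hn : 1 ≤ n) (r : VV n) (k : Fin 3) :
    ∑ s, Sm n r s * (if s.1 = k then (1:ℝ) else 0) =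
      if r.2.val = 0 then
        (if r.1 = 0 then 1/3 else (if k = r.1 then (1:ℝ) else 0) - 1/3)
      else 0 := by
  have hn' : (n:ℝ) ≠ 0 := by positivity
  have hcomm : ∀ (g : VV n → ℝ), (∑ s, Sm n r s * (if s.1 = k then (1:ℝ) else 0))
      = ∑ s, (if s.1 = k then (1:ℝ) else 0) * Sm n r s := by
    intro g; exact Finset.sum_congr rfl fun s _ => mul_comm _ _
  rw [hcomm (fun _ => 0)]
  by_cases hq : r.2.val = 0
  · by_cases hp : r.1 = 0
    · have h1 : ∀ s : VV n, (if s.1 = k then (1:ℝ) else 0) * Sm n r s =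
          (if s.1 = k then (1:ℝ) else 0) * (1/(6*n)) := fun s => by simp [Sm, hq, hp]
      rw [Finset.sum_congr rfl fun s _ => h1 s, sum_fst_mul, if_pos hq, if_pos hp]
      field_simp; ring
    · have h1 : ∀ s : VV n, (if s.1 = k then (1:ℝ) else 0) * Sm n r s =
          (if s.1 = k then (1:ℝ) else 0) * ((if k = r.1 then (1:ℝ) else 0)/(2*n) - 1/(6*n)) := by
        intro s
        by_cases h : s.1 = k
        · simp [Sm, hq, hp, h]
        · simp [h]
      rw [Finset.sum_congr rfl fun s _ => h1 s, sum_fst_mul, if_pos hq, if_neg hp]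
      by_cases hk : k = r.1 <;> simp [hk] <;> field_simp <;> ring
  · have h1 : ∀ s : VV n, (if s.1 = k then (1:ℝ) else 0) * Sm n r s =
        (if r.1 = k then (1:ℝ) else 0) * (if s = r then (1:ℝ) else 0)
          - (if s.1 = k then (1:ℝ) else 0) * ((if k = r.1 then (1:ℝ) else 0)/(2*n)) := by
      intro s
      by_cases h : s.1 = k
      · by_cases hsr : s = r
        · subst hsr; simp [Sm, hq, h, eq_comm]
        · simp [Sm, hq, h, hsr, Ne.symm hsr, eq_comm]
      · by_cases hsr : s = r
        · subst hsr; simp_all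
        · simp [h, hsr]
    rw [Finset.sum_congr rfl fun s _ => h1 s, Finset.sum_sub_distrib, ← Finset.mul_sum,
      sum_fst_mul, if_neg hq]
    have h2 : ∑ s : VV n, (if s = r then (1:ℝ) else 0) = 1 := by simp
    rw [h2]
    by_cases hk : k = r.1
    · rw [if_pos hk, if_pos hk.symm]; field_simp; ring
    · rw [if_neg hk, if_neg (Ne.symm hk)]; simp

lemma Sm_rowsum (hn : 1 ≤ n) (r : VV n) :
    ∑ s, Sm n r s = if r.2.val = 0 ∧ r.1 = 0 then (1:ℝ) else 0 := by
  have hn' : (n:ℝ) ≠ 0 := by positivity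
  by_cases hq : r.2.val = 0
  · by_cases hp : r.1 = 0
    · have h1 : ∀ s : VV n, Sm n r s = 1/(6*n) := fun s => by simp [Sm, hq, hp]
      rw [Finset.sum_congr rfl fun s _ => h1 s, sum_const_mul, if_pos ⟨hq, hp⟩]
      field_simp
    · have h1 : ∀ s : VV n, Sm n r s =
          (if s.1 = r.1 then (1:ℝ) else 0) * (1/(2*n)) - 1/(6*n) := by
        intro s
        simp [Sm, hq, hp, eq_comm]
        ring_nf
        by_cases h : s.1 = r.1 <;> simp [h, eq_comm]
      rw [Finset.sum_congr rfl fun s _ => h1 s, Finset.sum_sub_distrib, sum_fst_mul,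
        sum_const_mul, if_neg (by simp [hp])]
      field_simp; ring
  · have h1 : ∀ s : VV n, Sm n r s =
        (if s = r then (1:ℝ) else 0) - (if s.1 = r.1 then (1:ℝ) else 0) * (1/(2*n)) := by
      intro s
      simp [Sm, hq, eq_comm]
      ring_nf
      by_cases h : s.1 = r.1 <;> simp [h, eq_comm]
    rw [Finset.sum_congr rfl fun s _ => h1 s, Finset.sum_sub_distrib, sum_fst_mul]
    have h2 : ∑ s : VV n, (if s = r then (1:ℝ) else 0) = 1 := by simp
    rw [h2, if_neg (by simp [hq])]
    field_simp; ring

end M8nAux3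

namespace M8nAux4
open M8nAux M8nAux2 M8nAux3
variable (n : ℕ)

lemma hST (hn : 1 ≤ n) : Sm n * Tm n = 1 := by
  have hn' : (n:ℝ) ≠ 0 := by positivity
  ext r c
  rw [Matrix.mul_apply, Matrix.one_apply]
  by_cases hj : c.2.val = 0
  · by_cases hi : c.1 = 0
    · have h1 : ∀ s : VV n, Sm n r s * Tm n s c = Sm n r s := fun s => by
        simp [Tm, hj, hi]
      rw [Finset.sum_congr rfl fun s _ => h1 s, Sm_rowsum n hn r]
      have : (r = c) ↔ (r.2.val = 0 ∧ r.1 = 0) := by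
        obtain ⟨p, q⟩ := r; obtain ⟨i, j⟩ := c
        rw [sigma_eq_iff]
        simp only at hj hi
        constructor
        · rintro ⟨rfl, rfl⟩; exact ⟨hj, hi⟩
        · rintro ⟨h1, h2⟩
          exact ⟨h2.trans hi.symm, Fin.ext (h1.trans hj.symm)⟩
      by_cases h : r = c
      · rw [if_pos (this.mp h), if_pos h]
      · rw [if_neg (fun hh => h (this.mpr (by tauto))), if_neg h]
        -- need: ¬(r.2.val = 0 ∧ r.1 = 0)
    · have h1 : ∀ s : VV n, Sm n r s * Tm n s c =
          Sm n r s * (if s.1 = c.1 then (1:ℝ) else 0)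
            - Sm n r s * (if s.1 = 0 then (1:ℝ) else 0) := fun s => by
        simp [Tm, hj, hi, mul_sub]
      rw [Finset.sum_congr rfl fun s _ => h1 s, Finset.sum_sub_distrib,
        Sm_rowpart n hn r c.1, Sm_rowpart n hn r 0]
      have hrc : (r = c) ↔ (r.2.val = 0 ∧ r.1 = c.1) := by
        obtain ⟨p, q⟩ := r; obtain ⟨i, j⟩ := c
        rw [sigma_eq_iff]
        simp only at hj hi ⊢
        constructor
        · rintro ⟨rfl, rfl⟩; exact ⟨hj, rfl⟩
        · rintro ⟨h1, h2⟩
          exact ⟨h2, Fin.ext (h1.trans hj.symm)⟩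
      by_cases hq : r.2.val = 0
      · by_cases hp : r.1 = 0
        · rw [if_pos hq, if_pos hq, if_pos hp, if_pos hp, sub_self,
            if_neg (fun hh => hi ((hrc.mp hh).2.symm.trans hp))]
        · rw [if_pos hq, if_pos hq, if_neg hp, if_neg hp]
          have h0 : ((0 : Fin 3) = r.1) = False := by simp [eq_comm, hp]
          simp only [h0, if_false]
          by_cases hc : c.1 = r.1
          · rw [if_pos hc, if_pos (hrc.mpr ⟨hq, hc.symm⟩)]; ring
          · rw [if_neg hc, if_neg (fun hh => hc ((hrc.mp hh).2.symm))]; ring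
      · rw [if_neg hq, if_neg hq, sub_self, if_neg (fun hh => hq (hrc.mp hh).1)]
  · have h0 : (0:ℕ) < 2*n := by omega
    have h1 : ∀ s : VV n, Sm n r s * Tm n s c =
        Sm n r s * (if s = c then (1:ℝ) else 0)
          - Sm n r s * (if s.1 = c.1 ∧ s.2.val = 0 then (1:ℝ) else 0) := fun s => by
      simp [Tm, hj, mul_sub]
    rw [Finset.sum_congr rfl fun s _ => h1 s, Finset.sum_sub_distrib,
      sum_pick, sum_zerocol n hn (Sm n r) c.1]
    by_cases hq : r.2.val = 0
    · have hrc : r ≠ c := fun hh => by rw [hh] at hq; exact hj hq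
      rw [if_neg hrc]
      simp [Sm, hq]
    · have hrz : r ≠ ⟨c.1, ⟨0, h0⟩⟩ := fun hh => by rw [hh] at hq; exact hq rfl
      rw [Sm, Sm]
      simp only [if_neg hq, if_neg hrz]
      simp
end M8nAux4

namespace M8nAux5
open M8nAux M8nAux2 M8nAux3 M8nAux4
variable (n : ℕ)

noncomputable def Dg (n : ℕ) : Matrix (VV n) (VV n) ℝ :=
  Matrix.diagonal (fun v =>
    if v.2.val = 0 then (if v.1 = 0 then 16*(n:ℝ)-4 else 10*(n:ℝ)-4) else 8*(n:ℝ)-4)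

lemma hMT (hn : 1 ≤ n) : distSignlessLapMatrix (MG n) * Tm n = Tm n * Dg n := by
  ext r c
  rw [Matrix.mul_apply, Dg, Matrix.mul_diagonal]
  have h1 : ∀ s : VV n, distSignlessLapMatrix (MG n) r s * Tm n s c =
      (8*(n:ℝ)-4) * (Tm n s c * (if s = r then (1:ℝ) else 0)) + Tm n s c
        + (if s.1 = r.1 then (1:ℝ) else 0) * Tm n s c := by
    intro s
    rw [DQ_apply n hn,
      show (if r = s then (1:ℝ) else 0) = (if s = r then 1 else 0) by simp [eq_comm],
      show (if r.1 = s.1 then (1:ℝ) else 0) = (if s.1 = r.1 then 1 else 0) by simp [eq_comm]]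
    ring
  rw [Finset.sum_congr rfl fun s _ => h1 s, Finset.sum_add_distrib,
    Finset.sum_add_distrib, ← Finset.mul_sum, sum_pick n (Tm n · c) r,
    Tm_colsum n hn c, Tm_partsum n hn r.1 c]
  by_cases hj : c.2.val = 0
  · by_cases hi : c.1 = 0
    · have ht : Tm n r c = 1 := by simp [Tm, hj, hi]
      rw [ht, if_pos ⟨hj, hi⟩, if_pos hj, if_pos hj, if_pos hi, if_pos hi]
      ring
    · have ht : Tm n r c =
          (if r.1 = c.1 then (1:ℝ) else 0) - (if r.1 = 0 then (1:ℝ) else 0) := by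
        simp [Tm, hj, hi]
      rw [ht, if_neg (show ¬(c.2.val = 0 ∧ c.1 = 0) by simp [hi]), if_pos hj, if_pos hj, if_neg hi, if_neg hi]
      ring
  · have ht0 : (if c.2.val = 0 ∧ c.1 = 0 then (6*(n:ℝ)) else 0) = 0 :=
      if_neg (by simp [hj])
    rw [ht0, if_neg hj, if_neg hj]
    ring

lemma charpoly_eq (hn : 1 ≤ n) :
    (distSignlessLapMatrix (MG n)).charpoly = (Dg n).charpoly := by
  apply charpoly_similar _ _ (Tm n) (Sm n)
  · exact mul_eq_one_comm.mp (hST n hn)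
  · exact hMT n hn

end M8nAux5

namespace M8nAux6
open M8nAux M8nAux2 M8nAux3 M8nAux4 M8nAux5
variable (n : ℕ)

lemma charpoly_Dg (hn : 1 ≤ n) :
    (Dg n).charpoly = (X - C (8*(n:ℝ)-4))^(3*(2*n-1)) * (X - C (10*(n:ℝ)-4))^2 *
      (X - C (16*(n:ℝ)-4)) := by
  haveI : NeZero (2*n) := ⟨by omega⟩
  rw [Dg, charpoly_diagonal, ← Finset.univ_sigma_univ, Finset.prod_sigma]
  have hinner : ∀ a : Fin 3, ∏ b : Fin (2*n),
      (X - C (if ((⟨a, b⟩ : VV n)).2.val = 0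
        then (if (⟨a, b⟩ : VV n).1 = 0 then 16*(n:ℝ)-4 else 10*(n:ℝ)-4)
        else 8*(n:ℝ)-4))
      = (X - C (if a = 0 then 16*(n:ℝ)-4 else 10*(n:ℝ)-4)) *
        (X - C (8*(n:ℝ)-4))^(2*n-1) := by
    intro a
    have hf : ∀ b : Fin (2*n), (X - C (if (b:ℕ) = 0
        then (if a = 0 then 16*(n:ℝ)-4 else 10*(n:ℝ)-4) else 8*(n:ℝ)-4))
        = (if b = 0 then X - C (if a = 0 then 16*(n:ℝ)-4 else 10*(n:ℝ)-4)
            else X - C (8*(n:ℝ)-4)) := by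
      intro b
      by_cases hb : b = 0
      · subst hb; simp
      · have : (b : ℕ) ≠ 0 := fun hc => hb (by rw [← Fin.val_eq_val, Fin.val_zero]; exact hc)
        rw [if_neg this, if_neg hb]
    rw [Finset.prod_congr rfl fun b _ => hf b,
      ← Finset.mul_prod_erase _ _ (Finset.mem_univ (0 : Fin (2*n))), if_pos rfl]
    congr 1
    rw [Finset.prod_congr rfl (fun b hb => if_neg (Finset.ne_of_mem_erase hb)),
      Finset.prod_const, Finset.card_erase_of_mem (Finset.mem_univ _),
      Finset.card_univ, Fintype.card_fin]
  rw [Finset.prod_congr rfl fun a _ => hinner a, Fin.prod_univ_three]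
  have e1 : ((0:Fin 3) = 0) = True := by simp
  have e2 : ((1:Fin 3) = 0) = False := by decide
  have e3 : ((2:Fin 3) = 0) = False := by decide
  simp only [e1, e2, e3, if_true, if_false]
  rw [show 3*(2*n-1) = (2*n-1)+((2*n-1)+(2*n-1)) by ring, pow_add, pow_add]
  ring

end M8nAux6


/-- For `n ≥ 1`, the distance signless Laplacian spectrum of `K_{2n,2n,2n}` (the
non-commuting graph of `M_{8n}`) consists of `8n-4` with multiplicity `3(2n-1)`, `10n-4`
with multiplicity `2`, and `16n-4` with multiplicity `1`; in particular this graph is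
distance signless Laplacian integral for all `n`. -/
theorem distSignlessLaplacian_spectrum_M8n (n : ℕ) (hn : 1 ≤ n) :
    (distSignlessLapMatrix (SimpleGraph.completeMultipartiteGraph
        fun _ : Fin 3 => Fin (2 * n))).charpoly =
      (X - C (8 * (n : ℝ) - 4)) ^ (3 * (2 * n - 1)) * (X - C (10 * (n : ℝ) - 4)) ^ 2 *
        (X - C (16 * (n : ℝ) - 4)) ∧
    ∀ μ ∈ (distSignlessLapMatrix (SimpleGraph.completeMultipartiteGraph
        fun _ : Fin 3 => Fin (2 * n))).charpoly.roots,
      ∃ z : ℤ, μ = (z : ℝ) := by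
  have hcp : (distSignlessLapMatrix (SimpleGraph.completeMultipartiteGraph
      fun _ : Fin 3 => Fin (2 * n))).charpoly =
      (X - C (8 * (n : ℝ) - 4)) ^ (3 * (2 * n - 1)) * (X - C (10 * (n : ℝ) - 4)) ^ 2 *
        (X - C (16 * (n : ℝ) - 4)) := by
    rw [M8nAux5.charpoly_eq n hn, M8nAux6.charpoly_Dg n hn]
  refine ⟨hcp, ?_⟩
  intro μ hμ
  have h := Polynomial.isRoot_of_mem_roots hμ
  rw [Polynomial.IsRoot, hcp] at h
  simp only [eval_mul, eval_pow, eval_sub, eval_X, eval_C] at h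
  rcases mul_eq_zero.mp h with h4 | h4
  · rcases mul_eq_zero.mp h4 with h5 | h5
    · have hz : μ - (8*(n:ℝ)-4) = 0 :=
        (pow_eq_zero_iff (by omega : 3*(2*n-1) ≠ 0)).mp h5
      exact ⟨8*(n:ℤ)-4, by push_cast; linarith⟩
    · have hz : μ - (10*(n:ℝ)-4) = 0 :=
        (pow_eq_zero_iff (by norm_num : (2:ℕ) ≠ 0)).mp h5
      exact ⟨10*(n:ℤ)-4, by push_cast; linarith⟩
  · exact ⟨16*(n:ℤ)-4, by push_cast; linarith⟩
end
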